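/- arXiv:2604.08798 — 7 statements merged into one kernel-verified Lean document; each statement's English description precedes it below -/
import Mathlib

section
/- Let Y be integrable, G ∈ {0,1}, p ∈ [0,1], and X a random variable in a measurable space. Suppose E[Y | G, p, X] = μ(X) + τ·G a.s. for a measurable function μ and scalar τ, and E[G | p, X] = p a.s. Define m(X) := E[Y | X] and r(X) := E[p | X]. Then m(X) = μ(X) + τ·r(X) almost surely. -/
open MeasureTheory ProbabilityTheory

noncomputable section

/-- σ-algebra generated by a random variable. -/
def mSig {Ω α : Type*} [MeasurableSpace α] (f : Ω → α) : MeasurableSpace Ω :=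
  MeasurableSpace.comap f inferInstance

theorem stmt1 {Ω 𝓧 : Type*} [MeasurableSpace Ω] [MeasurableSpace 𝓧]
    (P : Measure Ω) [IsProbabilityMeasure P]
    (X : Ω → 𝓧) (Y p G : Ω → ℝ) (μf : 𝓧 → ℝ) (τ : ℝ)
    (hX : Measurable X) (hp : Measurable p) (hG : Measurable G)
    (hμf : Measurable μf) (hY : Integrable Y P)
    (hp01 : ∀ ω, p ω ∈ Set.Icc (0:ℝ) 1)
    (hG01 : ∀ ω, G ω = 0 ∨ G ω = 1)
    (hmean : P[Y | mSig G ⊔ mSig p ⊔ mSig X] =ᵐ[P] fun ω => μf (X ω) + τ * G ω)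
    (hcal : P[G | mSig p ⊔ mSig X] =ᵐ[P] p) :
    P[Y | mSig X] =ᵐ[P] fun ω => μf (X ω) + τ * ((P[p | mSig X]) ω) := by
  rename_i m0 _ _
  set m1 : MeasurableSpace Ω := mSig X with hm1def
  set m2 : MeasurableSpace Ω := mSig p ⊔ mSig X with hm2def
  set m3 : MeasurableSpace Ω := mSig G ⊔ mSig p ⊔ mSig X with hm3def
  have hGle : mSig G ≤ m0 := hG.comap_le
  have hple : mSig p ≤ m0 := hp.comap_le
  have hXle : mSig X ≤ m0 := hX.comap_le
  have h1 : m1 ≤ m0 := hXle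
  have h2 : m2 ≤ m0 := sup_le hple hXle
  have h3 : m3 ≤ m0 := sup_le (sup_le hGle hple) hXle
  have h12 : m1 ≤ m2 := le_sup_right
  have h13 : m1 ≤ m3 := le_sup_right
  -- integrability
  have hGint : Integrable G P := by
    refine (integrable_const (1:ℝ)).mono' hG.aestronglyMeasurable (ae_of_all _ fun ω => ?_)
    rcases hG01 ω with h | h <;> simp [h]
  have hpint : Integrable p P := by
    refine (integrable_const (1:ℝ)).mono' hp.aestronglyMeasurable (ae_of_all _ fun ω => ?_)
    rcases hp01 ω with ⟨h0, h1'⟩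
    rw [Real.norm_eq_abs, abs_of_nonneg h0]; exact h1'
  have hsum_int : Integrable (fun ω => μf (X ω) + τ * G ω) P :=
    (integrable_condExp (m := m3)).congr hmean
  have hμX_int : Integrable (fun ω => μf (X ω)) P := by
    have h := hsum_int.sub (hGint.const_mul τ)
    exact h.congr (ae_of_all _ fun ω => by simp [Pi.sub_apply])
  -- μf ∘ X is m1-strongly measurable
  have hμX_meas : StronglyMeasurable[m1] (fun ω => μf (X ω)) :=
    (hμf.comp (Measurable.of_comap_le le_rfl)).stronglyMeasurable
  -- E[G | m1] = E[p | m1]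
  have hGp : P[G | m1] =ᵐ[P] P[p | m1] := by
    have t1 : P[P[G | m2] | m1] =ᵐ[P] P[G | m1] := condExp_condExp_of_le h12 h2
    have t2 : P[P[G | m2] | m1] =ᵐ[P] P[p | m1] := condExp_congr_ae hcal
    exact t1.symm.trans t2
  -- main tower
  have tY : P[P[Y | m3] | m1] =ᵐ[P] P[Y | m1] := condExp_condExp_of_le h13 h3
  have tY2 : P[P[Y | m3] | m1] =ᵐ[P] P[fun ω => μf (X ω) + τ * G ω | m1] :=
    condExp_congr_ae hmean
  have hadd : P[fun ω => μf (X ω) + τ * G ω | m1]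
      =ᵐ[P] P[fun ω => μf (X ω) | m1] + P[fun ω => τ * G ω | m1] :=
    condExp_add hμX_int (hGint.const_mul τ) m1
  have hc1 : P[fun ω => μf (X ω) | m1] = fun ω => μf (X ω) :=
    condExp_of_stronglyMeasurable h1 hμX_meas hμX_int
  have hc2 : P[fun ω => τ * G ω | m1] =ᵐ[P] fun ω => τ * (P[G | m1]) ω := by
    have := condExp_smul (μ := P) (m := m1) τ G
    exact this
  have hc2' : P[fun ω => τ * G ω | m1] =ᵐ[P] fun ω => τ * (P[p | m1]) ω :=
    hc2.trans (hGp.mono fun ω h => by simp [h])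
  refine tY.symm.trans (tY2.trans (hadd.trans ?_))
  filter_upwards [hc2'] with ω h2'
  simp [hc1, h2']
end
end

section
/- Under the structural mean model E[Y | G, p, X] = μ(X) + τ·G a.s. and conditional calibration E[G | p, X] = p a.s., the outcome residual R := Y − m(X) (with m(X) = E[Y | X]) satisfies E[R | G, p, X] = τ·(G − r(X)) almost surely, where r(X) = E[p | X]. Equivalently, R = τ(G − r(X)) + ε with E[ε | G, p, X] = 0. -/
open MeasureTheory ProbabilityTheory

noncomputable section

theorem stmt2 {Ω 𝓧 : Type*} [MeasurableSpace Ω] [MeasurableSpace 𝓧]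
    (P : Measure Ω) [IsProbabilityMeasure P]
    (X : Ω → 𝓧) (Y p G : Ω → ℝ) (μf : 𝓧 → ℝ) (τ : ℝ)
    (hX : Measurable X) (hp : Measurable p) (hG : Measurable G)
    (hμf : Measurable μf) (hY : Integrable Y P)
    (hp01 : ∀ ω, p ω ∈ Set.Icc (0:ℝ) 1)
    (hG01 : ∀ ω, G ω = 0 ∨ G ω = 1)
    (hmean : P[Y | mSig G ⊔ mSig p ⊔ mSig X] =ᵐ[P] fun ω => μf (X ω) + τ * G ω)
    (hcal : P[G | mSig p ⊔ mSig X] =ᵐ[P] p) :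
    P[fun ω => Y ω - (P[Y | mSig X]) ω | mSig G ⊔ mSig p ⊔ mSig X]
      =ᵐ[P] fun ω => τ * (G ω - (P[p | mSig X]) ω) := by
  have h3 : mSig X ≤ ‹MeasurableSpace Ω› := hX.comap_le
  have h2 : mSig p ⊔ mSig X ≤ ‹MeasurableSpace Ω› :=
    sup_le (hp.comap_le) h3
  have h1 : mSig G ⊔ mSig p ⊔ mSig X ≤ ‹MeasurableSpace Ω› :=
    sup_le (sup_le (hG.comap_le) (hp.comap_le)) h3
  set m1 := mSig G ⊔ mSig p ⊔ mSig X with hm1def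
  set m2 := mSig p ⊔ mSig X with hm2def
  set m3 := mSig X with hm3def
  have h32 : m3 ≤ m2 := le_sup_right
  have h21 : m2 ≤ m1 := sup_le (le_sup_of_le_left le_sup_right) le_sup_right
  have h31 : m3 ≤ m1 := h32.trans h21
  -- integrability facts
  have hGint : Integrable G P := by
    refine (memLp_top_of_bound hG.aestronglyMeasurable 1 (Filter.Eventually.of_forall ?_)).integrable le_top
    intro ω; rcases hG01 ω with h | h <;> simp [h]
  have hpint : Integrable p P := by
    refine (memLp_top_of_bound hp.aestronglyMeasurable 1 (Filter.Eventually.of_forall ?_)).integrable le_top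
    intro ω; rcases hp01 ω with ⟨h0, h1'⟩; rw [Real.norm_eq_abs, abs_le]; constructor <;> linarith
  have hτGint : Integrable (fun ω => τ * G ω) P := hGint.const_mul τ
  have hτpint : Integrable (fun ω => τ * p ω) P := hpint.const_mul τ
  have hsum_int : Integrable (fun ω => μf (X ω) + τ * G ω) P :=
    (integrable_condExp (m := m1)).congr hmean
  have hμint : Integrable (fun ω => μf (X ω)) P := by
    have h := hsum_int.sub hτGint
    refine h.congr (Filter.Eventually.of_forall fun ω => ?_)
    simp
  -- μ ∘ X is m3-strongly measurable
  have hμsm : StronglyMeasurable[m3] (fun ω => μf (X ω)) := by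
    have hXm : Measurable[m3] X := fun s hs => ⟨s, hs, rfl⟩
    exact (hμf.comp hXm).stronglyMeasurable
  -- Step A : E[Y | m2] = μ(X) + τ p
  have stepA : P[Y | m2] =ᵐ[P] fun ω => μf (X ω) + τ * p ω := by
    have t1 : P[Y | m2] =ᵐ[P] P[fun ω => μf (X ω) + τ * G ω | m2] :=
      (condExp_condExp_of_le (μ := P) (f := Y) h21 h1).symm.trans (condExp_congr_ae hmean)
    have t2 : P[fun ω => μf (X ω) + τ * G ω | m2]
        =ᵐ[P] P[fun ω => μf (X ω) | m2] + P[fun ω => τ * G ω | m2] :=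
      condExp_add hμint hτGint _
    have t3 : P[fun ω => μf (X ω) | m2] =ᵐ[P] fun ω => μf (X ω) :=
      Filter.EventuallyEq.of_eq (condExp_of_stronglyMeasurable h2 (hμsm.mono h32) hμint)
    have t4 : P[fun ω => τ * G ω | m2] =ᵐ[P] fun ω => τ * p ω := by
      have := condExp_smul (μ := P) (m := m2) τ G
      refine this.trans ?_
      filter_upwards [hcal] with ω hω
      simp [hω]
    filter_upwards [t1, t2, t3, t4] with ω e1 e2 e3 e4
    simp only [Pi.add_apply] at e2
    rw [e1, e2, e3, e4]
  -- Step B : E[Y | m3] = μ(X) + τ E[p | m3]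
  have stepB : P[Y | m3] =ᵐ[P] fun ω => μf (X ω) + τ * (P[p | m3]) ω := by
    have t1 : P[Y | m3] =ᵐ[P] P[fun ω => μf (X ω) + τ * p ω | m3] :=
      (condExp_condExp_of_le (μ := P) (f := Y) h32 h2).symm.trans (condExp_congr_ae stepA)
    have t2 : P[fun ω => μf (X ω) + τ * p ω | m3]
        =ᵐ[P] P[fun ω => μf (X ω) | m3] + P[fun ω => τ * p ω | m3] :=
      condExp_add hμint hτpint _
    have t3 : P[fun ω => μf (X ω) | m3] =ᵐ[P] fun ω => μf (X ω) :=
      Filter.EventuallyEq.of_eq (condExp_of_stronglyMeasurable h3 hμsm hμint)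
    have t4 : P[fun ω => τ * p ω | m3] =ᵐ[P] fun ω => τ * (P[p | m3]) ω := by
      have := condExp_smul (μ := P) (m := m3) τ p
      refine this.trans ?_
      filter_upwards with ω; simp
    filter_upwards [t1, t2, t3, t4] with ω e1 e2 e3 e4
    simp only [Pi.add_apply] at e2
    rw [e1, e2, e3, e4]
  -- main computation
  have hsub : P[fun ω => Y ω - (P[Y | m3]) ω | m1]
      =ᵐ[P] P[Y | m1] - P[P[Y | m3] | m1] := condExp_sub hY integrable_condExp _
  have hfix : P[P[Y | m3] | m1] = P[Y | m3] :=
    condExp_of_stronglyMeasurable (μ := P) (f := P[Y | m3]) h1 (stronglyMeasurable_condExp.mono h31) integrable_condExp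
  rw [hfix] at hsub
  refine hsub.trans ?_
  filter_upwards [hmean, stepB] with ω e1 e2
  simp only [Pi.sub_apply, e1, e2]
  ring
end
end

section
/- Suppose Y and p have finite second moments, E[Y | G, p, X] = μ(X) + τ·G a.s., and E[G | p, X] = p a.s. Let m(X) = E[Y | X], r(X) = E[p | X], and V* = E[(p − r(X))²]. Then E[(2p − 1)(Y − m(X))] = 2τ·V*. -/
open MeasureTheory ProbabilityTheory

noncomputable section

lemma int_mul_condexp {Ω : Type*} [m0 : MeasurableSpace Ω] (P : Measure Ω)
    [IsProbabilityMeasure P]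
    {m : MeasurableSpace Ω} (hm : m ≤ m0) {f g : Ω → ℝ}
    (hf : StronglyMeasurable[m] f) (hg : Integrable g P)
    (hfg : Integrable (fun ω => f ω * g ω) P) :
    ∫ ω, f ω * g ω ∂P = ∫ ω, f ω * (P[g|m]) ω ∂P := by
  have h2 : P[fun ω => f ω * g ω|m] =ᵐ[P] fun ω => f ω * (P[g|m]) ω := by
    simpa [Pi.mul_def] using condExp_mul_of_stronglyMeasurable_left hf hfg hg
  calc ∫ ω, f ω * g ω ∂P = ∫ ω, (P[fun ω => f ω * g ω|m]) ω ∂P := (integral_condExp hm).symm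
    _ = ∫ ω, f ω * (P[g|m]) ω ∂P := integral_congr_ae h2

theorem stmt3 {Ω 𝓧 : Type*} [MeasurableSpace Ω] [MeasurableSpace 𝓧]
    (P : Measure Ω) [IsProbabilityMeasure P]
    (X : Ω → 𝓧) (Y p G : Ω → ℝ) (μf : 𝓧 → ℝ) (τ : ℝ)
    (hX : Measurable X) (hp : Measurable p) (hG : Measurable G)
    (hμf : Measurable μf) (hY2 : MemLp Y 2 P)
    (hp01 : ∀ ω, p ω ∈ Set.Icc (0:ℝ) 1)
    (hG01 : ∀ ω, G ω = 0 ∨ G ω = 1)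
    (hmean : P[Y | mSig G ⊔ mSig p ⊔ mSig X] =ᵐ[P] fun ω => μf (X ω) + τ * G ω)
    (hcal : P[G | mSig p ⊔ mSig X] =ᵐ[P] p) :
    ∫ ω, (2 * p ω - 1) * (Y ω - (P[Y | mSig X]) ω) ∂P
      = 2 * τ * ∫ ω, (p ω - (P[p | mSig X]) ω) ^ 2 ∂P := by
  have hmX : mSig X ≤ ‹MeasurableSpace Ω› := hX.comap_le
  have hmp : mSig p ≤ ‹MeasurableSpace Ω› := hp.comap_le
  have hmG : mSig G ≤ ‹MeasurableSpace Ω› := hG.comap_le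
  have hmH : mSig p ⊔ mSig X ≤ ‹MeasurableSpace Ω› := sup_le hmp hmX
  have hmGG : mSig G ⊔ mSig p ⊔ mSig X ≤ ‹MeasurableSpace Ω› := sup_le (sup_le hmG hmp) hmX
  have hXH : mSig X ≤ mSig p ⊔ mSig X := le_sup_right
  have hHG : mSig p ⊔ mSig X ≤ mSig G ⊔ mSig p ⊔ mSig X :=
    sup_le (le_sup_of_le_left le_sup_right) le_sup_right
  set r := P[p | mSig X] with hr_def
  set mY := P[Y | mSig X] with hmY_def
  -- basic integrability
  have hYint : Integrable Y P := hY2.integrable one_le_two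
  have hpb : ∀ ω, ‖p ω‖ ≤ 1 := fun ω => by
    have h := hp01 ω
    rw [Real.norm_eq_abs, abs_le]; exact ⟨by linarith [h.1], h.2⟩
  have hGb : ∀ ω, ‖G ω‖ ≤ 1 := fun ω => by
    rcases hG01 ω with h | h <;> simp [h]
  have hpint : Integrable p P :=
    memLp_one_iff_integrable.mp (MemLp.of_bound hp.aestronglyMeasurable 1 (ae_of_all _ hpb))
  have hGint : Integrable G P :=
    memLp_one_iff_integrable.mp (MemLp.of_bound hG.aestronglyMeasurable 1 (ae_of_all _ hGb))
  have hμGint : Integrable (fun ω => μf (X ω) + τ * G ω) P :=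
    integrable_condExp.congr hmean
  have hμint : Integrable (fun ω => μf (X ω)) P :=
    (hμGint.sub (hGint.const_mul τ)).congr (ae_of_all _ fun ω => by simp)
  -- strong measurability w.r.t. sub-σ-algebras
  have hpH : StronglyMeasurable[mSig p ⊔ mSig X] p :=
    (Measurable.mono (comap_measurable p) (le_sup_left : mSig p ≤ mSig p ⊔ mSig X)
      le_rfl).stronglyMeasurable
  have hμXm : StronglyMeasurable[mSig X] (fun ω => μf (X ω)) :=
    (hμf.comp (comap_measurable X)).stronglyMeasurable
  have hμHm : StronglyMeasurable[mSig p ⊔ mSig X] (fun ω => μf (X ω)) := hμXm.mono hXH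
  have hrX : StronglyMeasurable[mSig X] r := stronglyMeasurable_condExp
  have hmYX : StronglyMeasurable[mSig X] mY := stronglyMeasurable_condExp
  have hrint : Integrable r P := integrable_condExp
  have hmYint : Integrable mY P := integrable_condExp
  -- r ∈ [0,1] a.e.
  have hr0 : 0 ≤ᵐ[P] r := condExp_nonneg (ae_of_all _ fun ω => (hp01 ω).1)
  have hr1 : r ≤ᵐ[P] fun _ => (1:ℝ) := by
    have h := condExp_mono (μ := P) (m := mSig X) hpint (integrable_const (1:ℝ))
      (ae_of_all _ fun ω => (hp01 ω).2)
    have hc : P[(fun _ => (1:ℝ))|mSig X] = fun _ => (1:ℝ) := condExp_const hmX 1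
    rw [hc] at h; exact h
  have hrb : ∀ᵐ ω ∂P, ‖r ω‖ ≤ 1 := by
    filter_upwards [hr0, hr1] with ω h0 h1
    have h0' : (0:ℝ) ≤ r ω := h0
    rw [Real.norm_eq_abs, abs_le]; exact ⟨by linarith, h1⟩
  -- E[Y | p, X] = μf(X) + τ p
  have hYH : P[Y | mSig p ⊔ mSig X] =ᵐ[P] fun ω => μf (X ω) + τ * p ω := by
    have e1 : P[Y | mSig p ⊔ mSig X]
        =ᵐ[P] P[P[Y | mSig G ⊔ mSig p ⊔ mSig X] | mSig p ⊔ mSig X] :=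
      (condExp_condExp_of_le hHG hmGG).symm
    have e2 : P[P[Y | mSig G ⊔ mSig p ⊔ mSig X] | mSig p ⊔ mSig X]
        =ᵐ[P] P[fun ω => μf (X ω) + τ * G ω | mSig p ⊔ mSig X] := condExp_congr_ae hmean
    have eadd : P[fun ω => μf (X ω) + τ * G ω | mSig p ⊔ mSig X]
        =ᵐ[P] P[fun ω => μf (X ω) | mSig p ⊔ mSig X]
              + P[fun ω => τ * G ω | mSig p ⊔ mSig X] :=
      condExp_add hμint (hGint.const_mul τ) _
    have h4 : P[fun ω => μf (X ω) | mSig p ⊔ mSig X] = fun ω => μf (X ω) :=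
      condExp_of_stronglyMeasurable hmH hμHm hμint
    have h5 : P[fun ω => τ * G ω | mSig p ⊔ mSig X]
        =ᵐ[P] fun ω => τ * (P[G | mSig p ⊔ mSig X]) ω := by
      simpa [Pi.smul_def, smul_eq_mul] using condExp_smul (μ := P) (m := mSig p ⊔ mSig X) τ G
    refine (e1.trans (e2.trans (eadd.trans ?_)))
    rw [h4]
    filter_upwards [h5, hcal] with ω h5ω hcω
    simp only [Pi.add_apply, h5ω, hcω]
  -- E[Y | X] = μf(X) + τ r
  have hYX : mY =ᵐ[P] fun ω => μf (X ω) + τ * r ω := by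
    have e1 : P[Y | mSig X] =ᵐ[P] P[P[Y | mSig p ⊔ mSig X] | mSig X] :=
      (condExp_condExp_of_le hXH hmH).symm
    have e2 : P[P[Y | mSig p ⊔ mSig X] | mSig X]
        =ᵐ[P] P[fun ω => μf (X ω) + τ * p ω | mSig X] := condExp_congr_ae hYH
    have eadd : P[fun ω => μf (X ω) + τ * p ω | mSig X]
        =ᵐ[P] P[fun ω => μf (X ω) | mSig X] + P[fun ω => τ * p ω | mSig X] :=
      condExp_add hμint (hpint.const_mul τ) _
    have h4 : P[fun ω => μf (X ω) | mSig X] = fun ω => μf (X ω) :=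
      condExp_of_stronglyMeasurable hmX hμXm hμint
    have h5 : P[fun ω => τ * p ω | mSig X] =ᵐ[P] fun ω => τ * r ω := by
      simpa [Pi.smul_def, smul_eq_mul] using condExp_smul (μ := P) (m := mSig X) τ p
    refine (e1.trans (e2.trans (eadd.trans ?_)))
    rw [h4]
    filter_upwards [h5] with ω h5ω
    simp only [Pi.add_apply, h5ω]
  -- E[2p-1 | X] = 2r - 1
  have h2p1X : P[fun ω => 2 * p ω - 1 | mSig X] =ᵐ[P] fun ω => 2 * r ω - 1 := by
    have esub : P[fun ω => 2 * p ω - 1 | mSig X]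
        =ᵐ[P] P[fun ω => 2 * p ω | mSig X] - P[fun _ => (1:ℝ) | mSig X] :=
      condExp_sub (hpint.const_mul 2) (integrable_const 1) _
    have h5 : P[fun ω => 2 * p ω | mSig X] =ᵐ[P] fun ω => 2 * r ω := by
      simpa [Pi.smul_def, smul_eq_mul] using condExp_smul (μ := P) (m := mSig X) (2:ℝ) p
    have hc : P[(fun _ => (1:ℝ))|mSig X] = fun _ => (1:ℝ) := condExp_const hmX 1
    refine esub.trans ?_
    rw [hc]
    filter_upwards [h5] with ω h5ω
    simp only [Pi.sub_apply, h5ω]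
  -- product integrabilities
  have h2p1b : ∀ ω, ‖2 * p ω - 1‖ ≤ 1 := fun ω => by
    have h := hp01 ω
    rw [Real.norm_eq_abs, abs_le]; exact ⟨by linarith [h.1], by linarith [h.2]⟩
  have h2p1m : AEStronglyMeasurable (fun ω => 2 * p ω - 1) P :=
    ((hp.const_mul 2).sub measurable_const).aestronglyMeasurable
  have I1 : Integrable (fun ω => (2 * p ω - 1) * Y ω) P :=
    hYint.bdd_mul h2p1m (ae_of_all _ h2p1b)
  have I2 : Integrable (fun ω => (2 * p ω - 1) * mY ω) P :=
    hmYint.bdd_mul h2p1m (ae_of_all _ h2p1b)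
  have Iμp : Integrable (fun ω => μf (X ω) * p ω) P :=
    (hμint.bdd_mul hp.aestronglyMeasurable (ae_of_all _ hpb)).congr
      (ae_of_all _ fun ω => mul_comm _ _)
  have Iμr : Integrable (fun ω => μf (X ω) * r ω) P :=
    (hμint.bdd_mul hrint.aestronglyMeasurable hrb).congr
      (ae_of_all _ fun ω => mul_comm _ _)
  have Ipp : Integrable (fun ω => p ω * p ω) P :=
    hpint.bdd_mul hp.aestronglyMeasurable (ae_of_all _ hpb)
  have Irp : Integrable (fun ω => r ω * p ω) P :=
    hpint.bdd_mul hrint.aestronglyMeasurable hrb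
  have Irr : Integrable (fun ω => r ω * r ω) P :=
    hrint.bdd_mul hrint.aestronglyMeasurable hrb
  have ImY2p1 : Integrable (fun ω => mY ω * (2 * p ω - 1)) P :=
    I2.congr (ae_of_all _ fun ω => mul_comm _ _)
  -- split the LHS
  have hsplit : ∫ ω, (2 * p ω - 1) * (Y ω - mY ω) ∂P
      = (∫ ω, (2 * p ω - 1) * Y ω ∂P) - ∫ ω, (2 * p ω - 1) * mY ω ∂P := by
    rw [← integral_sub I1 I2]
    congr 1; funext ω; ring
  -- first term
  have hT1 : ∫ ω, (2 * p ω - 1) * Y ω ∂P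
      = ∫ ω, (2 * p ω - 1) * (μf (X ω) + τ * p ω) ∂P := by
    have hfm : StronglyMeasurable[mSig p ⊔ mSig X] (fun ω => 2 * p ω - 1) :=
      (stronglyMeasurable_const.mul hpH).sub stronglyMeasurable_const
    rw [int_mul_condexp P hmH hfm hYint I1]
    exact integral_congr_ae (hYH.mono fun ω hω => by dsimp only; rw [hω])
  -- second term
  have hT2 : ∫ ω, (2 * p ω - 1) * mY ω ∂P
      = ∫ ω, (2 * r ω - 1) * (μf (X ω) + τ * r ω) ∂P := by
    have e1 : ∫ ω, (2 * p ω - 1) * mY ω ∂P = ∫ ω, mY ω * (2 * p ω - 1) ∂P := by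
      simp_rw [mul_comm]
    have hg2 : Integrable (fun ω => 2 * p ω - 1) P :=
      (hpint.const_mul 2).sub (integrable_const 1)
    rw [e1, int_mul_condexp P hmX hmYX hg2 ImY2p1]
    refine integral_congr_ae ?_
    filter_upwards [h2p1X, hYX] with ω h1 h2
    rw [h1, h2]; ring
  -- scalar identities
  have Eμ : ∫ ω, μf (X ω) * p ω ∂P = ∫ ω, μf (X ω) * r ω ∂P :=
    int_mul_condexp P hmX hμXm hpint Iμp
  have Epr : ∫ ω, r ω * p ω ∂P = ∫ ω, r ω * r ω ∂P :=
    int_mul_condexp P hmX hrX hpint Irp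
  have Ep : ∫ ω, p ω ∂P = ∫ ω, r ω ∂P := (integral_condExp hmX).symm
  -- expansions
  have hE1 : ∫ ω, (2 * p ω - 1) * (μf (X ω) + τ * p ω) ∂P
      = 2 * ∫ ω, μf (X ω) * p ω ∂P + 2 * τ * ∫ ω, p ω * p ω ∂P
        - ∫ ω, μf (X ω) ∂P - τ * ∫ ω, p ω ∂P := by
    have hsh : (fun ω => (2 * p ω - 1) * (μf (X ω) + τ * p ω))
        = fun ω => (2 * (μf (X ω) * p ω) + 2 * τ * (p ω * p ω))
            - (μf (X ω) + τ * p ω) := funext fun ω => by ring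
    have IA1 : Integrable (fun ω => 2 * (μf (X ω) * p ω)) P := Iμp.const_mul 2
    have IA2 : Integrable (fun ω => 2 * τ * (p ω * p ω)) P := Ipp.const_mul (2 * τ)
    have IB2 : Integrable (fun ω => τ * p ω) P := hpint.const_mul τ
    have IA : Integrable (fun ω => 2 * (μf (X ω) * p ω) + 2 * τ * (p ω * p ω)) P := IA1.add IA2
    have IB : Integrable (fun ω => μf (X ω) + τ * p ω) P := hμint.add IB2
    rw [hsh, integral_sub IA IB, integral_add IA1 IA2, integral_add hμint IB2,
      integral_const_mul, integral_const_mul, integral_const_mul]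
    ring
  have hE2 : ∫ ω, (2 * r ω - 1) * (μf (X ω) + τ * r ω) ∂P
      = 2 * ∫ ω, μf (X ω) * r ω ∂P + 2 * τ * ∫ ω, r ω * r ω ∂P
        - ∫ ω, μf (X ω) ∂P - τ * ∫ ω, r ω ∂P := by
    have hsh : (fun ω => (2 * r ω - 1) * (μf (X ω) + τ * r ω))
        = fun ω => (2 * (μf (X ω) * r ω) + 2 * τ * (r ω * r ω))
            - (μf (X ω) + τ * r ω) := funext fun ω => by ring
    have IA1 : Integrable (fun ω => 2 * (μf (X ω) * r ω)) P := Iμr.const_mul 2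
    have IA2 : Integrable (fun ω => 2 * τ * (r ω * r ω)) P := Irr.const_mul (2 * τ)
    have IB2 : Integrable (fun ω => τ * r ω) P := hrint.const_mul τ
    have IA : Integrable (fun ω => 2 * (μf (X ω) * r ω) + 2 * τ * (r ω * r ω)) P := IA1.add IA2
    have IB : Integrable (fun ω => μf (X ω) + τ * r ω) P := hμint.add IB2
    rw [hsh, integral_sub IA IB, integral_add IA1 IA2, integral_add hμint IB2,
      integral_const_mul, integral_const_mul, integral_const_mul]
    ring
  have hE3 : ∫ ω, (p ω - r ω) ^ 2 ∂P
      = ∫ ω, p ω * p ω ∂P - 2 * ∫ ω, r ω * p ω ∂P + ∫ ω, r ω * r ω ∂P := by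
    have hsh : (fun ω => (p ω - r ω) ^ 2)
        = fun ω => (p ω * p ω + r ω * r ω) - 2 * (r ω * p ω) := funext fun ω => by ring
    have IA : Integrable (fun ω => p ω * p ω + r ω * r ω) P := Ipp.add Irr
    have IB : Integrable (fun ω => 2 * (r ω * p ω)) P := Irp.const_mul 2
    rw [hsh, integral_sub IA IB, integral_add Ipp Irr, integral_const_mul]
    ring
  rw [hsplit, hT1, hT2, hE1, hE2, hE3]
  rw [Eμ, Epr, Ep]
  ring
end
end

section
/- Under the structural mean model and conditional calibration assumptions with finite second moments, if additionally V* := E[(p − r(X))²] > 0, then the structural coefficient is identified by τ = E[(2p − 1)(Y − m(X))] / (2·E[(p − r(X))²]). -/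
open MeasureTheory ProbabilityTheory

noncomputable section

lemma pull_out {Ω : Type*} {m : MeasurableSpace Ω} [mΩ : MeasurableSpace Ω]
    (hm : m ≤ mΩ) (P : Measure Ω) [IsFiniteMeasure P] {f g : Ω → ℝ}
    (hf : StronglyMeasurable[m] f) (hg : Integrable g P)
    (hfg : Integrable (f * g) P) :
    ∫ ω, f ω * g ω ∂P = ∫ ω, f ω * (P[g|m]) ω ∂P := by
  have h1 : ∫ ω, (f * g) ω ∂P = ∫ ω, (P[f * g|m]) ω ∂P := (integral_condExp (μ := P) (f := f*g) hm).symm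
  have h2 := integral_congr_ae (condExp_mul_of_stronglyMeasurable_left hf hfg hg)
  calc ∫ ω, f ω * g ω ∂P = ∫ ω, (P[f * g|m]) ω ∂P := h1
    _ = ∫ ω, (f * P[g|m]) ω ∂P := h2
    _ = ∫ ω, f ω * (P[g|m]) ω ∂P := rfl

theorem stmt4 {Ω 𝓧 : Type*} [MeasurableSpace Ω] [MeasurableSpace 𝓧]
    (P : Measure Ω) [IsProbabilityMeasure P]
    (X : Ω → 𝓧) (Y p G : Ω → ℝ) (μf : 𝓧 → ℝ) (τ : ℝ)
    (hX : Measurable X) (hp : Measurable p) (hG : Measurable G)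
    (hμf : Measurable μf) (hY2 : MemLp Y 2 P)
    (hp01 : ∀ ω, p ω ∈ Set.Icc (0:ℝ) 1)
    (hG01 : ∀ ω, G ω = 0 ∨ G ω = 1)
    (hmean : P[Y | mSig G ⊔ mSig p ⊔ mSig X] =ᵐ[P] fun ω => μf (X ω) + τ * G ω)
    (hcal : P[G | mSig p ⊔ mSig X] =ᵐ[P] p)
    (hV : 0 < ∫ ω, (p ω - (P[p | mSig X]) ω) ^ 2 ∂P) :
    τ = (∫ ω, (2 * p ω - 1) * (Y ω - (P[Y | mSig X]) ω) ∂P)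
          / (2 * ∫ ω, (p ω - (P[p | mSig X]) ω) ^ 2 ∂P) := by
  -- sub-σ-algebras
  have hleX : mSig X ≤ ‹MeasurableSpace Ω› := hX.comap_le
  have hlep : mSig p ≤ ‹MeasurableSpace Ω› := hp.comap_le
  have hleG : mSig G ≤ ‹MeasurableSpace Ω› := hG.comap_le
  have hlepX : mSig p ⊔ mSig X ≤ ‹MeasurableSpace Ω› := sup_le hlep hleX
  have hleA : mSig G ⊔ mSig p ⊔ mSig X ≤ ‹MeasurableSpace Ω› :=
    sup_le (sup_le hleG hlep) hleX
  have hX_pX : mSig X ≤ mSig p ⊔ mSig X := le_sup_right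
  have hpX_A : mSig p ⊔ mSig X ≤ mSig G ⊔ mSig p ⊔ mSig X :=
    sup_le (le_sup_of_le_left le_sup_right) le_sup_right
  have hX_A : mSig X ≤ mSig G ⊔ mSig p ⊔ mSig X := hX_pX.trans hpX_A
  -- measurability wrt sub-σ-algebras
  have hpm : Measurable[mSig p] p := measurable_iff_comap_le.mpr le_rfl
  have hXm : Measurable[mSig X] X := measurable_iff_comap_le.mpr le_rfl
  have hμfXm : StronglyMeasurable[mSig X] (fun ω => μf (X ω)) :=
    (hμf.comp hXm).stronglyMeasurable
  -- q := 2p - 1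
  set q : Ω → ℝ := fun ω => 2 * p ω - 1 with hq_def
  have hqp : StronglyMeasurable[mSig p] q :=
    ((measurable_const.mul hpm).sub measurable_const).stronglyMeasurable
  have hqpX : StronglyMeasurable[mSig p ⊔ mSig X] q := hqp.mono le_sup_left
  have hqA : StronglyMeasurable[mSig G ⊔ mSig p ⊔ mSig X] q :=
    hqpX.mono hpX_A
  have hqX : StronglyMeasurable[mSig X] (P[p | mSig X]) := stronglyMeasurable_condExp
  -- bounds
  have hpb : ∀ ω, ‖p ω‖ ≤ 1 := fun ω => by
    have h := hp01 ω; rw [Real.norm_eq_abs, abs_le]; constructor <;> [linarith [h.1]; exact h.2]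
  have hGb : ∀ ω, ‖G ω‖ ≤ 1 := fun ω => by
    rcases hG01 ω with h | h <;> simp [h]
  have hqb : ∀ ω, ‖q ω‖ ≤ 1 := fun ω => by
    have h := hp01 ω
    have hqω : q ω = 2 * p ω - 1 := rfl
    rw [hqω, Real.norm_eq_abs, abs_le]
    constructor <;> [linarith [h.1]; linarith [h.2]]
  -- basic integrability
  have bint : ∀ {f : Ω → ℝ}, AEStronglyMeasurable f P → ∀ C : ℝ,
      (∀ᵐ ω ∂P, ‖f ω‖ ≤ C) → Integrable f P :=
    fun hf C hb => (integrable_const C).mono' hf hb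
  have hYint : Integrable Y P := hY2.integrable one_le_two
  have hpint : Integrable p P := bint hp.aestronglyMeasurable 1 (ae_of_all _ hpb)
  have hGint : Integrable G P := bint hG.aestronglyMeasurable 1 (ae_of_all _ hGb)
  have hqmeas : Measurable q := (measurable_const.mul hp).sub measurable_const
  have hqint : Integrable q P := bint hqmeas.aestronglyMeasurable 1 (ae_of_all _ hqb)
  -- μf ∘ X integrable
  have hμfXint : Integrable (fun ω => μf (X ω)) P := by
    have h1 : Integrable (fun ω => μf (X ω) + τ * G ω) P :=
      integrable_condExp.congr hmean
    have h2 : Integrable (fun ω => (μf (X ω) + τ * G ω) - τ * G ω) P :=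
      h1.sub (hGint.const_mul τ)
    exact h2.congr (ae_of_all _ fun ω => by ring)
  -- r bounds a.e.
  set r : Ω → ℝ := P[p | mSig X] with hr_def
  have hr0 : 0 ≤ᵐ[P] r := condExp_nonneg (ae_of_all _ fun ω => (hp01 ω).1)
  have hr1 : r ≤ᵐ[P] fun _ => (1:ℝ) := by
    have h := condExp_mono (μ := P) (m := mSig X) hpint (integrable_const 1)
      (ae_of_all _ fun ω => (hp01 ω).2)
    have hc := condExp_const (μ := P) hleX (1:ℝ)
    rw [hc] at h; exact h
  have hrb : ∀ᵐ ω ∂P, ‖r ω‖ ≤ 1 := by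
    filter_upwards [hr0, hr1] with ω h0 h1
    simp only [Pi.zero_apply] at h0
    rw [Real.norm_eq_abs, abs_le]; exact ⟨by linarith, h1⟩
  have hrint : Integrable r P := integrable_condExp
  have hrsm : AEStronglyMeasurable r P :=
    (stronglyMeasurable_condExp.mono hleX).aestronglyMeasurable
  -- conditional expectation computations
  have hcq : P[q | mSig X] =ᵐ[P] fun ω => 2 * r ω - 1 := by
    have hq_eq : q = (fun ω => 2 * p ω) - fun _ => (1:ℝ) := rfl
    rw [hq_eq]
    refine (condExp_sub (hpint.const_mul 2) (integrable_const 1) (mSig X)).trans ?_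
    have h2 : P[fun ω => 2 * p ω | mSig X] =ᵐ[P] fun ω => 2 * r ω := by
      have he : (fun ω => 2 * p ω) = (2:ℝ) • p := rfl
      rw [he]
      refine (condExp_smul (μ := P) (m := mSig X) (2:ℝ) p).trans ?_
      exact ae_of_all _ fun ω => by simp [smul_eq_mul]; rfl
    have hc := condExp_const (μ := P) hleX (1:ℝ)
    filter_upwards [h2] with ω h2ω
    simp only [Pi.sub_apply, h2ω, hc]
  have hGX : P[G | mSig X] =ᵐ[P] r := by
    have h1 := condExp_condExp_of_le (μ := P) hX_pX hlepX (f := G)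
    have h2 := condExp_congr_ae (μ := P) (m := mSig X) hcal
    exact h1.symm.trans h2
  have hmX : P[Y | mSig X] =ᵐ[P] fun ω => μf (X ω) + τ * r ω := by
    have h1 := (condExp_condExp_of_le (μ := P) hX_A hleA (f := Y)).symm
    have h2 := condExp_congr_ae (μ := P) (m := mSig X) hmean
    have h3 : P[fun ω => μf (X ω) + τ * G ω | mSig X]
        =ᵐ[P] fun ω => μf (X ω) + τ * r ω := by
      have he : (fun ω => μf (X ω) + τ * G ω)
          = (fun ω => μf (X ω)) + fun ω => τ * G ω := rfl
      rw [he]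
      refine (condExp_add hμfXint (hGint.const_mul τ) (mSig X)).trans ?_
      have hμ : P[fun ω => μf (X ω) | mSig X] = fun ω => μf (X ω) :=
        condExp_of_stronglyMeasurable hleX hμfXm hμfXint
      have hτG : P[fun ω => τ * G ω | mSig X] =ᵐ[P] fun ω => τ * (P[G|mSig X]) ω := by
        have he2 : (fun ω => τ * G ω) = τ • G := rfl
        rw [he2]
        exact (condExp_smul (μ := P) (m := mSig X) τ G).trans
          (ae_of_all _ fun ω => by simp [smul_eq_mul])
      filter_upwards [hτG, hGX] with ω ha hb
      simp only [Pi.add_apply, hμ, ha, hb]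
    exact (h1.trans h2).trans h3
  -- more bounds
  have h2rb : ∀ᵐ ω ∂P, ‖2 * r ω - 1‖ ≤ 1 := by
    filter_upwards [hr0, hr1] with ω h0 h1
    simp only [Pi.zero_apply] at h0
    rw [Real.norm_eq_abs, abs_le]; constructor <;> linarith
  have h2rsm : AEStronglyMeasurable (fun ω => 2 * r ω - 1) P :=
    (aestronglyMeasurable_const.mul hrsm).sub aestronglyMeasurable_const
  -- integrability of products
  have hqY : Integrable (fun ω => q ω * Y ω) P :=
    hYint.bdd_mul hqmeas.aestronglyMeasurable (ae_of_all _ hqb)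
  have hqmY : Integrable (fun ω => q ω * (P[Y|mSig X]) ω) P :=
    integrable_condExp.bdd_mul hqmeas.aestronglyMeasurable (ae_of_all _ hqb)
  have hqG : Integrable (fun ω => q ω * G ω) P :=
    hGint.bdd_mul hqmeas.aestronglyMeasurable (ae_of_all _ hqb)
  have hqp' : Integrable (fun ω => q ω * p ω) P :=
    hpint.bdd_mul hqmeas.aestronglyMeasurable (ae_of_all _ hqb)
  have hμfXq : Integrable (fun ω => μf (X ω) * q ω) P :=
    (hμfXint.bdd_mul hqmeas.aestronglyMeasurable (ae_of_all _ hqb)).congr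
      (ae_of_all _ fun ω => mul_comm _ _)
  have hμfX2r : Integrable (fun ω => μf (X ω) * (2 * r ω - 1)) P := by
    refine Integrable.mono' hμfXint.abs
      ((hμf.comp hX).aestronglyMeasurable.mul h2rsm) ?_
    filter_upwards [h2rb] with ω h
    rw [norm_mul]
    calc ‖μf (X ω)‖ * ‖2 * r ω - 1‖ ≤ ‖μf (X ω)‖ * 1 :=
          mul_le_mul_of_nonneg_left h (norm_nonneg _)
      _ = |μf (X ω)| := by rw [mul_one, Real.norm_eq_abs]
  have hr2r : Integrable (fun ω => r ω * (2 * r ω - 1)) P := by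
    refine bint (hrsm.mul h2rsm) 1 ?_
    filter_upwards [hrb, h2rb] with ω h1 h2
    rw [norm_mul]
    calc ‖r ω‖ * ‖2 * r ω - 1‖ ≤ 1 * 1 := mul_le_mul h1 h2 (norm_nonneg _) zero_le_one
      _ = 1 := one_mul 1
  have hmYq : Integrable (fun ω => (P[Y|mSig X]) ω * q ω) P :=
    (integrable_condExp.bdd_mul hqmeas.aestronglyMeasurable (ae_of_all _ hqb)).congr
      (ae_of_all _ fun ω => mul_comm _ _)
  have hrp : Integrable (fun ω => r ω * p ω) P := hpint.bdd_mul hrsm hrb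
  have hpp : Integrable (fun ω => p ω * p ω) P :=
    hpint.bdd_mul hp.aestronglyMeasurable (ae_of_all _ hpb)
  have hrr : Integrable (fun ω => r ω * r ω) P := hrint.bdd_mul hrsm hrb
  -- key integral identities
  have E1 : ∫ ω, q ω * Y ω ∂P = ∫ ω, q ω * (μf (X ω) + τ * G ω) ∂P := by
    rw [pull_out hleA P hqA hYint hqY]
    exact integral_congr_ae (by filter_upwards [hmean] with ω h; rw [h])
  have E2 : ∫ ω, q ω * G ω ∂P = ∫ ω, q ω * p ω ∂P := by
    rw [pull_out hlepX P hqpX hGint hqG]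
    exact integral_congr_ae (by filter_upwards [hcal] with ω h; rw [h])
  have E3 : ∫ ω, μf (X ω) * q ω ∂P = ∫ ω, μf (X ω) * (2 * r ω - 1) ∂P := by
    rw [pull_out hleX P hμfXm hqint hμfXq]
    exact integral_congr_ae (by filter_upwards [hcq] with ω h; rw [h])
  have E4 : ∫ ω, (P[Y|mSig X]) ω * q ω ∂P
      = ∫ ω, (P[Y|mSig X]) ω * (2 * r ω - 1) ∂P := by
    rw [pull_out hleX P stronglyMeasurable_condExp hqint hmYq]
    exact integral_congr_ae (by filter_upwards [hcq] with ω h; rw [h])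
  have E6 : ∫ ω, r ω * p ω ∂P = ∫ ω, r ω * r ω ∂P :=
    pull_out hleX P (stronglyMeasurable_condExp :
      StronglyMeasurable[mSig X] (P[p|mSig X])) hpint hrp
  have hpr_eq : ∫ ω, p ω ∂P = ∫ ω, r ω ∂P := (integral_condExp hleX).symm
  -- numerator computation
  have hA : ∫ ω, q ω * Y ω ∂P
      = (∫ ω, μf (X ω) * (2 * r ω - 1) ∂P) + τ * ∫ ω, q ω * p ω ∂P := by
    rw [E1]
    have h1 : ∫ ω, q ω * (μf (X ω) + τ * G ω) ∂P
        = ∫ ω, (μf (X ω) * q ω + τ * (q ω * G ω)) ∂P :=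
      integral_congr_ae (ae_of_all _ fun ω => by ring)
    rw [h1, integral_add hμfXq (hqG.const_mul τ), integral_const_mul, E3, E2]
  have hB : ∫ ω, q ω * (P[Y|mSig X]) ω ∂P
      = (∫ ω, μf (X ω) * (2 * r ω - 1) ∂P)
        + τ * ∫ ω, r ω * (2 * r ω - 1) ∂P := by
    have h0 : ∫ ω, q ω * (P[Y|mSig X]) ω ∂P = ∫ ω, (P[Y|mSig X]) ω * q ω ∂P :=
      integral_congr_ae (ae_of_all _ fun ω => mul_comm _ _)
    rw [h0, E4]
    have h1 : ∫ ω, (P[Y|mSig X]) ω * (2 * r ω - 1) ∂P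
        = ∫ ω, (μf (X ω) * (2 * r ω - 1) + τ * (r ω * (2 * r ω - 1))) ∂P := by
      refine integral_congr_ae ?_
      filter_upwards [hmX] with ω h
      rw [h]; ring
    rw [h1, integral_add hμfX2r (hr2r.const_mul τ), integral_const_mul]
  have hsplit : ∫ ω, q ω * (Y ω - (P[Y|mSig X]) ω) ∂P
      = (∫ ω, q ω * Y ω ∂P) - ∫ ω, q ω * (P[Y|mSig X]) ω ∂P := by
    have h1 : ∫ ω, q ω * (Y ω - (P[Y|mSig X]) ω) ∂P
        = ∫ ω, (q ω * Y ω - q ω * (P[Y|mSig X]) ω) ∂P :=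
      integral_congr_ae (ae_of_all _ fun ω => by ring)
    rw [h1, integral_sub hqY hqmY]
  -- scalar identities
  have hqp_val : ∫ ω, q ω * p ω ∂P
      = 2 * (∫ ω, p ω * p ω ∂P) - ∫ ω, p ω ∂P := by
    have h1 : ∫ ω, q ω * p ω ∂P = ∫ ω, (2 * (p ω * p ω) - p ω) ∂P :=
      integral_congr_ae (ae_of_all _ fun ω => by
        show (2 * p ω - 1) * p ω = _; ring)
    rw [h1, integral_sub (hpp.const_mul 2) hpint, integral_const_mul]
  have hr2r_val : ∫ ω, r ω * (2 * r ω - 1) ∂P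
      = 2 * (∫ ω, r ω * r ω ∂P) - ∫ ω, r ω ∂P := by
    have h1 : ∫ ω, r ω * (2 * r ω - 1) ∂P = ∫ ω, (2 * (r ω * r ω) - r ω) ∂P :=
      integral_congr_ae (ae_of_all _ fun ω => by ring)
    rw [h1, integral_sub (hrr.const_mul 2) hrint, integral_const_mul]
  have hD : ∫ ω, (p ω - r ω)^2 ∂P
      = (∫ ω, p ω * p ω ∂P) - ∫ ω, r ω * r ω ∂P := by
    have h1 : ∫ ω, (p ω - r ω)^2 ∂P
        = ∫ ω, ((p ω * p ω + r ω * r ω) - 2 * (r ω * p ω)) ∂P :=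
      integral_congr_ae (ae_of_all _ fun ω => by ring)
    have hpprr : Integrable (fun ω => p ω * p ω + r ω * r ω) P := hpp.add hrr
    rw [h1, integral_sub hpprr (hrp.const_mul 2)]
    have h2 : ∫ ω, (p ω * p ω + r ω * r ω) ∂P
        = (∫ ω, p ω * p ω ∂P) + ∫ ω, r ω * r ω ∂P := integral_add hpp hrr
    rw [h2, integral_const_mul, E6]
    ring
  -- final assembly
  have hnum : ∫ ω, q ω * (Y ω - (P[Y|mSig X]) ω) ∂P
      = τ * (2 * ∫ ω, (p ω - r ω)^2 ∂P) := by
    rw [hsplit, hA, hB, hqp_val, hr2r_val, hD, hpr_eq]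
    ring
  have h2V : (2:ℝ) * ∫ ω, (p ω - r ω)^2 ∂P ≠ 0 := ne_of_gt (by linarith)
  have hgoal : ∫ ω, (2 * p ω - 1) * (Y ω - (P[Y|mSig X]) ω) ∂P
      = ∫ ω, q ω * (Y ω - (P[Y|mSig X]) ω) ∂P := rfl
  rw [hgoal, hnum]
  exact (mul_div_cancel_right₀ τ h2V).symm
end
end

section
/- Suppose E[Y | G, p, X] = μ(X) + τ·G a.s., E[G | p, X] = p a.s., r(X) := E[p | X] = 1/2 a.s., P(0 < p < 1) > 0, and for almost every x the conditional law of a := p − 1/2 given X = x is symmetric about zero with P(a = 0) = 0. Then E[Y − m(X) | p > 1/2] − E[Y − m(X) | p ≤ 1/2] = κ·τ, where κ = 2·E[|p − 1/2|] ∈ (0, 1), and m(X) = E[Y | X]. Moreover κ < 1 unless p ∈ {0,1} a.s., and κ > 0 whenever E[(p − r(X))²] > 0. -/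
open MeasureTheory ProbabilityTheory

noncomputable section

theorem stmt16 {Ω 𝓧 : Type*} [MeasurableSpace Ω] [MeasurableSpace 𝓧]
    (P : Measure Ω) [IsProbabilityMeasure P]
    (X : Ω → 𝓧) (Y p G : Ω → ℝ) (μf : 𝓧 → ℝ) (τ : ℝ)
    (hX : Measurable X) (hp : Measurable p) (hG : Measurable G)
    (hμf : Measurable μf) (hY : Integrable Y P)
    (hp01 : ∀ ω, p ω ∈ Set.Icc (0:ℝ) 1)
    (hG01 : ∀ ω, G ω = 0 ∨ G ω = 1)
    (hmean : P[Y | mSig G ⊔ mSig p ⊔ mSig X] =ᵐ[P] fun ω => μf (X ω) + τ * G ω)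
    (hcal : P[G | mSig p ⊔ mSig X] =ᵐ[P] p)
    (hr : P[p | mSig X] =ᵐ[P] fun _ => (1:ℝ)/2)
    (hpin : P {ω | 0 < p ω ∧ p ω < 1} ≠ 0)
    (hsym : Measure.map (fun ω => (X ω, p ω - 1/2)) P
      = Measure.map (fun ω => (X ω, -(p ω - 1/2))) P)
    (h0 : P {ω | p ω = 1/2} = 0) :
    ((∫ ω, (Y ω - (P[Y | mSig X]) ω) ∂(ProbabilityTheory.cond P {ω | 1/2 < p ω}))
        - (∫ ω, (Y ω - (P[Y | mSig X]) ω) ∂(ProbabilityTheory.cond P {ω | p ω ≤ 1/2}))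
      = (2 * ∫ ω, |p ω - 1/2| ∂P) * τ) ∧
    (0 < ∫ ω, (p ω - (P[p | mSig X]) ω) ^ 2 ∂P →
      0 < 2 * ∫ ω, |p ω - 1/2| ∂P) ∧
    (¬ (∀ᵐ ω ∂P, p ω = 0 ∨ p ω = 1) → 2 * ∫ ω, |p ω - 1/2| ∂P < 1) := by
  -- basic integrability facts
  have habs_le : ∀ ω, |p ω - 1/2| ≤ 1/2 := fun ω =>
    abs_le.2 ⟨by linarith [(hp01 ω).1], by linarith [(hp01 ω).2]⟩
  have habs : Integrable (fun ω => |p ω - 1/2|) P :=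
    ⟨((hp.sub measurable_const).abs).aestronglyMeasurable,
      HasFiniteIntegral.of_bounded (C := 1/2)
        (ae_of_all _ (fun ω => by simpa using habs_le ω))⟩
  have hGint : Integrable G P :=
    ⟨hG.aestronglyMeasurable,
      HasFiniteIntegral.of_bounded (C := 1)
        (ae_of_all _ (fun ω => by rcases hG01 ω with h | h <;> simp [h]))⟩
  have hpint : Integrable p P :=
    ⟨hp.aestronglyMeasurable,
      HasFiniteIntegral.of_bounded (C := 1)
        (ae_of_all _ (fun ω => by
          have := (hp01 ω).1; have := (hp01 ω).2
          simp only [Real.norm_eq_abs, abs_le]; constructor <;> linarith))⟩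
  -- positivity of ∫|p - 1/2|
  have habs_pos : 0 < ∫ ω, |p ω - 1/2| ∂P := by
    rw [integral_pos_iff_support_of_nonneg (fun ω => abs_nonneg _) habs]
    rw [pos_iff_ne_zero]
    intro hz
    have hsub : (Set.univ : Set Ω) ⊆
        Function.support (fun ω => |p ω - 1/2|) ∪ {ω | p ω = 1/2} := by
      intro ω _
      by_cases h : p ω = 1/2
      · exact Or.inr h
      · exact Or.inl (fun hc => h (by have := abs_eq_zero.mp hc; linarith))
    have hle : P Set.univ ≤ P (Function.support (fun ω => |p ω - 1/2|))
        + P {ω | p ω = 1/2} := (measure_mono hsub).trans (measure_union_le _ _)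
    rw [hz, h0, measure_univ] at hle
    simp at hle
  -- strict upper bound ∫|p - 1/2| < 1/2
  have habs_lt : ∫ ω, |p ω - 1/2| ∂P < 1/2 := by
    have hg : Integrable (fun ω => 1/2 - |p ω - 1/2|) P :=
      (integrable_const _).sub habs
    have hgpos : 0 < ∫ ω, (1/2 - |p ω - 1/2|) ∂P := by
      rw [integral_pos_iff_support_of_nonneg
        (fun ω => by simpa using habs_le ω) hg]
      rw [pos_iff_ne_zero]
      intro hz
      apply hpin
      have hsub : {ω | 0 < p ω ∧ p ω < 1} ⊆
          Function.support (fun ω => 1/2 - |p ω - 1/2|) := by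
        intro ω hω
        have h1 : |p ω - 1/2| < 1/2 :=
          abs_lt.2 ⟨by linarith [hω.1], by linarith [hω.2]⟩
        simp only [Function.mem_support]
        intro h; rw [sub_eq_zero] at h; linarith [h1]
      exact le_antisymm (le_trans (measure_mono hsub) (le_of_eq hz)) zero_le
    have heq2 : ∫ ω, (1/2 - |p ω - 1/2|) ∂P
        = 1/2 - ∫ ω, |p ω - 1/2| ∂P := by
      rw [integral_sub (integrable_const _) habs, integral_const]
      simp
    linarith [heq2 ▸ hgpos]
  refine ⟨?_, fun _ => by linarith, fun _ => by linarith⟩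
  -- Main identity
  have hp_le : mSig p ≤ ‹MeasurableSpace Ω› := hp.comap_le
  have hmX_le : mSig X ≤ ‹MeasurableSpace Ω› := hX.comap_le
  have hmpX_le : mSig p ⊔ mSig X ≤ ‹MeasurableSpace Ω› :=
    sup_le hp.comap_le hX.comap_le
  have hmAll_le : mSig G ⊔ mSig p ⊔ mSig X ≤ ‹MeasurableSpace Ω› :=
    sup_le (sup_le hG.comap_le hp.comap_le) hX.comap_le
  have hX_le_pX : mSig X ≤ mSig p ⊔ mSig X := le_sup_right
  have hX_le_All : mSig X ≤ mSig G ⊔ mSig p ⊔ mSig X := le_sup_right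
  have hp_le_pX : mSig p ≤ mSig p ⊔ mSig X := le_sup_left
  have hp_le_All : mSig p ≤ mSig G ⊔ mSig p ⊔ mSig X :=
    le_trans le_sup_right le_sup_left
  -- the set A
  set A : Set Ω := {ω | 1/2 < p ω} with hA_def
  have hA_p : MeasurableSet[mSig p] A :=
    ⟨Set.Ioi (1/2), measurableSet_Ioi, rfl⟩
  have hAc_p : MeasurableSet[mSig p] Aᶜ := hA_p.compl
  have hAmeas : MeasurableSet A := hp_le _ hA_p
  have hAcmeas : MeasurableSet Aᶜ := hAmeas.compl
  have hAc_eq : {ω | p ω ≤ 1/2} = Aᶜ := by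
    ext ω; simp [hA_def, not_lt]
  -- P A = 1/2
  have hPA : (P A).toReal = 1/2 := by
    have h1 : Measure.map (fun ω => (X ω, p ω - 1/2)) P
        (Set.univ ×ˢ Set.Ioi (0:ℝ)) = P A := by
      rw [Measure.map_apply (show Measurable (fun ω => (X ω, p ω - 1/2)) from hX.prodMk (hp.sub measurable_const))
        (MeasurableSet.univ.prod measurableSet_Ioi)]
      congr 1; ext ω; simp [hA_def, sub_pos]
    have h2 : Measure.map (fun ω => (X ω, -(p ω - 1/2))) P
        (Set.univ ×ˢ Set.Ioi (0:ℝ)) = P {ω | p ω < 1/2} := by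
      rw [Measure.map_apply (show Measurable (fun ω => (X ω, -(p ω - 1/2))) from hX.prodMk ((hp.sub measurable_const).neg))
        (MeasurableSet.univ.prod measurableSet_Ioi)]
      congr 1; ext ω; simp only [Set.mem_preimage, Set.mem_prod, Set.mem_univ,
        Set.mem_Ioi, true_and, Set.mem_setOf_eq]
      constructor <;> intro h <;> linarith
    have heq : P A = P {ω | p ω < 1/2} := by
      rw [← h1, ← h2, hsym]
    have hAc2 : P Aᶜ = P {ω | p ω < 1/2} := by
      apply le_antisymm
      · have hsub : Aᶜ ⊆ {ω | p ω < 1/2} ∪ {ω | p ω = 1/2} := by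
          intro ω hω
          simp only [hA_def, Set.mem_compl_iff, Set.mem_setOf_eq, not_lt] at hω
          rcases lt_or_eq_of_le hω with h | h
          · exact Or.inl h
          · exact Or.inr (show p ω = 1/2 from h)
        calc P Aᶜ ≤ P {ω | p ω < 1/2} + P {ω | p ω = 1/2} :=
              (measure_mono hsub).trans (measure_union_le _ _)
          _ = P {ω | p ω < 1/2} := by rw [h0, add_zero]
      · refine measure_mono (fun ω hω => ?_)
        simp only [Set.mem_setOf_eq] at hω
        simp only [hA_def, Set.mem_compl_iff, Set.mem_setOf_eq, not_lt]
        linarith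
    have hsum : P A + P Aᶜ = 1 := by
      rw [measure_add_measure_compl hAmeas, measure_univ]
    rw [hAc2, ← heq] at hsum
    have hfin : P A ≠ ⊤ := measure_ne_top _ _
    have h3 : (P A).toReal + (P A).toReal = 1 := by
      have := congrArg ENNReal.toReal hsum
      rwa [ENNReal.toReal_add hfin hfin, ENNReal.toReal_one] at this
    linarith
  have hPAc : (P Aᶜ).toReal = 1/2 := by
    have hsum : P A + P Aᶜ = 1 := by
      rw [measure_add_measure_compl hAmeas, measure_univ]
    have := congrArg ENNReal.toReal hsum
    rw [ENNReal.toReal_add (measure_ne_top _ _) (measure_ne_top _ _),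
      ENNReal.toReal_one, hPA] at this
    linarith
  -- m = E[Y|X] = μf ∘ X + τ/2 a.e.
  have hμτG_int : Integrable (fun ω => μf (X ω) + τ * G ω) P :=
    (integrable_condExp).congr hmean
  have hμX_int : Integrable (fun ω => μf (X ω)) P := by
    have h5 := hμτG_int.sub (hGint.const_mul τ)
    refine h5.congr (ae_of_all _ fun ω => ?_)
    simp
  have e1 : P[Y | mSig X] =ᵐ[P] P[fun ω => μf (X ω) + τ * G ω | mSig X] := by
    have t1 : P[P[Y | mSig G ⊔ mSig p ⊔ mSig X] | mSig X] =ᵐ[P] P[Y | mSig X] :=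
      condExp_condExp_of_le hX_le_All hmAll_le
    exact t1.symm.trans (condExp_congr_ae hmean)
  have e3 : P[G | mSig X] =ᵐ[P] fun _ => (1:ℝ)/2 := by
    have t2 : P[P[G | mSig p ⊔ mSig X] | mSig X] =ᵐ[P] P[G | mSig X] :=
      condExp_condExp_of_le hX_le_pX hmpX_le
    exact t2.symm.trans ((condExp_congr_ae hcal).trans hr)
  have e2 : P[fun ω => μf (X ω) + τ * G ω | mSig X]
      =ᵐ[P] fun ω => μf (X ω) + τ * (P[G | mSig X]) ω := by
    have ha : P[(fun ω => μf (X ω)) + (fun ω => τ * G ω) | mSig X]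
        =ᵐ[P] P[fun ω => μf (X ω) | mSig X] + P[fun ω => τ * G ω | mSig X] :=
      condExp_add hμX_int (hGint.const_mul τ) _
    have hb : P[fun ω => μf (X ω) | mSig X] = fun ω => μf (X ω) :=
      condExp_of_stronglyMeasurable hmX_le
        ((hμf.comp (Measurable.of_comap_le le_rfl)).stronglyMeasurable) hμX_int
    have hc : P[fun ω => τ * G ω | mSig X] =ᵐ[P] fun ω => τ * (P[G | mSig X]) ω := by
      have := condExp_smul (μ := P) (m := mSig X) τ G
      exact this
    refine (ha.trans ?_)
    filter_upwards [hc] with ω hω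
    simp only [Pi.add_apply, hb, hω]
  have hm_eq : P[Y | mSig X] =ᵐ[P] fun ω => μf (X ω) + τ * (1/2) := by
    filter_upwards [e1, e2, e3] with ω h1 h2 h3
    rw [h1, h2, h3]
  -- key set-integral identity
  have key : ∀ S : Set Ω, MeasurableSet[mSig p] S →
      ∫ ω in S, (Y ω - (P[Y | mSig X]) ω) ∂P
        = τ * ∫ ω in S, p ω ∂P - τ/2 * (P S).toReal := by
    intro S hS
    have hSmeas : MeasurableSet S := hp_le _ hS
    have hS_All : MeasurableSet[mSig G ⊔ mSig p ⊔ mSig X] S := hp_le_All _ hS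
    have hS_pX : MeasurableSet[mSig p ⊔ mSig X] S := hp_le_pX _ hS
    have h1 : ∫ ω in S, Y ω ∂P = ∫ ω in S, (μf (X ω) + τ * G ω) ∂P := by
      rw [← setIntegral_condExp hmAll_le hY hS_All]
      exact setIntegral_congr_ae hSmeas (hmean.mono fun ω h _ => h)
    have h2 : ∫ ω in S, G ω ∂P = ∫ ω in S, p ω ∂P := by
      rw [← setIntegral_condExp hmpX_le hGint hS_pX]
      exact setIntegral_congr_ae hSmeas (hcal.mono fun ω h _ => h)
    have h3 : ∫ ω in S, (P[Y | mSig X]) ω ∂P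
        = ∫ ω in S, (μf (X ω) + τ * (1/2)) ∂P :=
      setIntegral_congr_ae hSmeas (hm_eq.mono fun ω h _ => h)
    rw [integral_sub hY.integrableOn (integrable_condExp.integrableOn), h1, h3,
      integral_add hμX_int.integrableOn ((hGint.const_mul τ).integrableOn),
      integral_add hμX_int.integrableOn (integrableOn_const),
      integral_const_mul τ, h2, setIntegral_const]
    simp only [smul_eq_mul, Measure.real]
    ring
  -- compute ∫_A p and ∫_Aᶜ p in terms of |p - 1/2|
  have hA_p_int : ∫ ω in A, p ω ∂P
      = ∫ ω in A, |p ω - 1/2| ∂P + 1/2 * (P A).toReal := by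
    have hEq : Set.EqOn p (fun ω => |p ω - 1/2| + 1/2) A := by
      intro ω hω
      have h4 : (0:ℝ) < p ω - 1/2 := by
        simp only [hA_def, Set.mem_setOf_eq] at hω; linarith
      simp only [abs_of_pos h4]; ring
    rw [setIntegral_congr_fun hAmeas hEq,
      integral_add habs.integrableOn (integrableOn_const),
      setIntegral_const]
    simp only [smul_eq_mul, Measure.real]; ring
  have hAc_p_int : ∫ ω in Aᶜ, p ω ∂P
      = 1/2 * (P Aᶜ).toReal - ∫ ω in Aᶜ, |p ω - 1/2| ∂P := by
    have hEq : Set.EqOn p (fun ω => 1/2 - |p ω - 1/2|) Aᶜ := by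
      intro ω hω
      have h4 : p ω - 1/2 ≤ 0 := by
        simp only [hA_def, Set.mem_compl_iff, Set.mem_setOf_eq, not_lt] at hω
        linarith
      simp only [abs_of_nonpos h4]; ring
    rw [setIntegral_congr_fun hAcmeas hEq,
      integral_sub (integrableOn_const (s := Aᶜ) (μ := P) (C := (1/2:ℝ))) habs.integrableOn,
      setIntegral_const]
    simp only [smul_eq_mul, Measure.real]; ring
  have hsplit_abs : ∫ ω in A, |p ω - 1/2| ∂P + ∫ ω in Aᶜ, |p ω - 1/2| ∂P
      = ∫ ω, |p ω - 1/2| ∂P := integral_add_compl hAmeas habs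
  -- conditional expectation integrals
  have hcondA : ∫ ω, (Y ω - (P[Y | mSig X]) ω) ∂(ProbabilityTheory.cond P A)
      = 2 * ∫ ω in A, (Y ω - (P[Y | mSig X]) ω) ∂P := by
    rw [ProbabilityTheory.cond, integral_smul_measure, ENNReal.toReal_inv, hPA]
    norm_num
  have hcondAc : ∫ ω, (Y ω - (P[Y | mSig X]) ω) ∂(ProbabilityTheory.cond P Aᶜ)
      = 2 * ∫ ω in Aᶜ, (Y ω - (P[Y | mSig X]) ω) ∂P := by
    rw [ProbabilityTheory.cond, integral_smul_measure, ENNReal.toReal_inv, hPAc]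
    norm_num
  rw [hAc_eq]
  rw [hcondA, hcondAc, key A hA_p, key Aᶜ hAc_p, hA_p_int, hAc_p_int, hPA, hPAc]
  rw [← hsplit_abs]
  ring
end
end

section
/- Let ψ̃(τ, m, r) := 2(p − r(X))·(Y − m(X) − τ·(p − r(X))), with m(X) = E[Y | X] and r(X) = E[p | X]. Then for all bounded measurable directions δ_m and δ_r, both Gateaux derivatives (d/dh) E[ψ̃(τ, m + h·δ_m, r)]|_{h=0} and (d/dh) E[ψ̃(τ, m, r + h·δ_r)]|_{h=0} equal zero; i.e., the reformulated score is Neyman-orthogonal in both nuisance directions. -/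
open MeasureTheory ProbabilityTheory

noncomputable section

/-- Orthogonality: a bounded `m`-measurable function is orthogonal to `f - E[f|m]`. -/
lemma ortho_aux {Ω : Type*} [m0 : MeasurableSpace Ω] (P : Measure Ω) [IsProbabilityMeasure P]
    {m : MeasurableSpace Ω} (hm : m ≤ m0) (g : Ω → ℝ) (hg : Measurable[m] g)
    (C : ℝ) (hC : ∀ ω, |g ω| ≤ C) (f : Ω → ℝ) (hf : Integrable f P) :
    ∫ ω, g ω * (f ω - (P[f|m]) ω) ∂P = 0 := by
  have hgsm : StronglyMeasurable[m] g := hg.stronglyMeasurable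
  have hg0 : AEStronglyMeasurable[m0] g P := (hgsm.mono hm).aestronglyMeasurable
  have hbd : ∃ C, ∀ ω, ‖g ω‖ ≤ C := ⟨C, fun ω => by simpa using hC ω⟩
  have hgf : Integrable (g * f) P := hf.bdd_mul hg0 (Filter.Eventually.of_forall fun ω => by simpa using hC ω)
  have hgc : Integrable (g * (P[f|m])) P := integrable_condExp.bdd_mul hg0 (Filter.Eventually.of_forall fun ω => by simpa using hC ω)
  have hpull : P[g * f|m] =ᵐ[P] g * P[f|m] :=
    condExp_mul_of_stronglyMeasurable_left hgsm hgf hf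
  have h1 : ∫ ω, (g * f) ω ∂P = ∫ ω, (g * (P[f|m])) ω ∂P := by
    rw [← integral_condExp hm (f := g * f)]
    exact integral_congr_ae hpull
  have hsplit : (fun ω => g ω * (f ω - (P[f|m]) ω))
      = fun ω => (g * f) ω - (g * (P[f|m])) ω := by
    funext ω; simp [mul_sub]
  rw [hsplit, integral_sub hgf hgc, h1, sub_self]

theorem stmt18 {Ω 𝓧 : Type*} [MeasurableSpace Ω] [MeasurableSpace 𝓧]
    (P : Measure Ω) [IsProbabilityMeasure P]
    (X : Ω → 𝓧) (Y p : Ω → ℝ) (τ : ℝ) (δm δr : 𝓧 → ℝ)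
    (hX : Measurable X) (hp : Measurable p)
    (hY2 : MemLp Y 2 P) (hp01 : ∀ ω, p ω ∈ Set.Icc (0:ℝ) 1)
    (hδm : Measurable δm) (hδmb : ∃ C, ∀ x, |δm x| ≤ C)
    (hδr : Measurable δr) (hδrb : ∃ C, ∀ x, |δr x| ≤ C) :
    HasDerivAt (fun h : ℝ => ∫ ω, 2 * (p ω - (P[p | mSig X]) ω)
        * (Y ω - ((P[Y | mSig X]) ω + h * δm (X ω))
            - τ * (p ω - (P[p | mSig X]) ω)) ∂P) 0 0 ∧
    HasDerivAt (fun h : ℝ => ∫ ω, 2 * (p ω - ((P[p | mSig X]) ω + h * δr (X ω)))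
        * (Y ω - (P[Y | mSig X]) ω
            - τ * (p ω - ((P[p | mSig X]) ω + h * δr (X ω)))) ∂P) 0 0 := by
  have hm : mSig X ≤ ‹MeasurableSpace Ω› := hX.comap_le
  obtain ⟨Cm, hCm⟩ := hδmb
  obtain ⟨Cr, hCr⟩ := hδrb
  -- measurability of the directions w.r.t. mSig X
  have hXm : Measurable[mSig X] X := comap_measurable X
  have hdmeas : Measurable[mSig X] (fun ω => δm (X ω)) := hδm.comp hXm
  have hbmeas : Measurable[mSig X] (fun ω => δr (X ω)) := hδr.comp hXm
  have hd0 : AEStronglyMeasurable (fun ω => δm (X ω)) P :=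
    ((hdmeas.mono hm le_rfl).stronglyMeasurable).aestronglyMeasurable
  have hb0 : AEStronglyMeasurable (fun ω => δr (X ω)) P :=
    ((hbmeas.mono hm le_rfl).stronglyMeasurable).aestronglyMeasurable
  -- integrability
  have hp_int : Integrable p P := by
    refine (integrable_const (1:ℝ)).mono' hp.aestronglyMeasurable ?_
    filter_upwards with ω
    have := hp01 ω
    rw [Real.norm_eq_abs, abs_le]
    exact ⟨by linarith [this.1], by linarith [this.2]⟩
  have hY_int : Integrable Y P := hY2.integrable one_le_two
  have ha_int : Integrable (fun ω => p ω - (P[p|mSig X]) ω) P :=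
    hp_int.sub integrable_condExp
  have hR_int : Integrable (fun ω => Y ω - (P[Y|mSig X]) ω) P :=
    hY_int.sub integrable_condExp
  have ha_meas : AEStronglyMeasurable (fun ω => p ω - (P[p|mSig X]) ω) P :=
    hp.aestronglyMeasurable.sub
      ((stronglyMeasurable_condExp.mono hm).aestronglyMeasurable)
  -- a.e. bound on a := p - E[p|X]
  have hc_nn : (0:Ω → ℝ) ≤ᵐ[P] P[p|mSig X] :=
    condExp_nonneg (Filter.Eventually.of_forall fun ω => (hp01 ω).1)
  have hc_le : P[p|mSig X] ≤ᵐ[P] fun _ => (1:ℝ) := by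
    have h := condExp_mono (μ := P) (m := mSig X) hp_int (integrable_const (1:ℝ))
      (Filter.Eventually.of_forall fun ω => (hp01 ω).2)
    rwa [condExp_const hm] at h
  have ha_bdd : ∀ᵐ ω ∂P, ‖p ω - (P[p|mSig X]) ω‖ ≤ 1 := by
    filter_upwards [hc_nn, hc_le] with ω h1 h2
    have := hp01 ω
    rw [Real.norm_eq_abs, abs_le]
    exact ⟨by linarith [this.1, show (P[p|mSig X]) ω ≤ 1 from h2],
      by linarith [this.2, show (0:ℝ) ≤ (P[p|mSig X]) ω from h1]⟩
  -- products
  have haR : Integrable (fun ω => (p ω - (P[p|mSig X]) ω) * (Y ω - (P[Y|mSig X]) ω)) P :=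
    hR_int.bdd_mul ha_meas ha_bdd
  have haa : Integrable (fun ω => (p ω - (P[p|mSig X]) ω) * (p ω - (P[p|mSig X]) ω)) P :=
    ha_int.bdd_mul ha_meas ha_bdd
  have hd_bdd : ∀ᵐ ω ∂P, ‖δm (X ω)‖ ≤ Cm :=
    Filter.Eventually.of_forall fun ω => by rw [Real.norm_eq_abs]; exact hCm (X ω)
  have hb_bdd : ∀ᵐ ω ∂P, ‖δr (X ω)‖ ≤ Cr :=
    Filter.Eventually.of_forall fun ω => by rw [Real.norm_eq_abs]; exact hCr (X ω)
  have hda : Integrable (fun ω => δm (X ω) * (p ω - (P[p|mSig X]) ω)) P :=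
    ha_int.bdd_mul hd0 hd_bdd
  have hba : Integrable (fun ω => δr (X ω) * (p ω - (P[p|mSig X]) ω)) P :=
    ha_int.bdd_mul hb0 hb_bdd
  have hbR : Integrable (fun ω => δr (X ω) * (Y ω - (P[Y|mSig X]) ω)) P :=
    hR_int.bdd_mul hb0 hb_bdd
  have hbb : Integrable (fun ω => δr (X ω) * δr (X ω)) P := by
    refine (integrable_const (Cr * Cr)).mono' (hb0.mul hb0) ?_
    filter_upwards with ω
    have h1 := hCr (X ω)
    have h0 : (0:ℝ) ≤ Cr := le_trans (abs_nonneg _) h1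
    rw [Real.norm_eq_abs, abs_mul]
    exact mul_le_mul h1 h1 (abs_nonneg _) h0
  -- orthogonality relations
  have oda : ∫ ω, δm (X ω) * (p ω - (P[p|mSig X]) ω) ∂P = 0 :=
    ortho_aux P hm _ hdmeas Cm (fun ω => hCm (X ω)) p hp_int
  have oba : ∫ ω, δr (X ω) * (p ω - (P[p|mSig X]) ω) ∂P = 0 :=
    ortho_aux P hm _ hbmeas Cr (fun ω => hCr (X ω)) p hp_int
  have obR : ∫ ω, δr (X ω) * (Y ω - (P[Y|mSig X]) ω) ∂P = 0 :=
    ortho_aux P hm _ hbmeas Cr (fun ω => hCr (X ω)) Y hY_int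
  -- the "base" integrand is integrable
  have hInt0 : Integrable (fun ω => 2 * (p ω - (P[p|mSig X]) ω)
      * (Y ω - (P[Y|mSig X]) ω - τ * (p ω - (P[p|mSig X]) ω))) P := by
    have he : (fun ω => 2 * (p ω - (P[p|mSig X]) ω)
        * (Y ω - (P[Y|mSig X]) ω - τ * (p ω - (P[p|mSig X]) ω)))
        = fun ω => 2 * ((p ω - (P[p|mSig X]) ω) * (Y ω - (P[Y|mSig X]) ω))
          - (2 * τ) * ((p ω - (P[p|mSig X]) ω) * (p ω - (P[p|mSig X]) ω)) := by
      funext ω; ring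
    rw [he]
    exact (haR.const_mul 2).sub (haa.const_mul (2 * τ))
  constructor
  · -- first derivative: the function is constant in h
    have key1 : ∀ h : ℝ, (∫ ω, 2 * (p ω - (P[p | mSig X]) ω)
        * (Y ω - ((P[Y | mSig X]) ω + h * δm (X ω))
            - τ * (p ω - (P[p | mSig X]) ω)) ∂P)
        = ∫ ω, 2 * (p ω - (P[p|mSig X]) ω)
          * (Y ω - (P[Y|mSig X]) ω - τ * (p ω - (P[p|mSig X]) ω)) ∂P := by
      intro h
      have he : (fun ω => 2 * (p ω - (P[p | mSig X]) ω)
          * (Y ω - ((P[Y | mSig X]) ω + h * δm (X ω))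
              - τ * (p ω - (P[p | mSig X]) ω)))
          = fun ω => (2 * (p ω - (P[p|mSig X]) ω)
            * (Y ω - (P[Y|mSig X]) ω - τ * (p ω - (P[p|mSig X]) ω)))
            - (2 * h) * (δm (X ω) * (p ω - (P[p|mSig X]) ω)) := by
        funext ω; ring
      rw [he, integral_sub hInt0 (hda.const_mul (2 * h)), integral_const_mul,
        oda, mul_zero, sub_zero]
    have hfun : (fun h : ℝ => ∫ ω, 2 * (p ω - (P[p | mSig X]) ω)
        * (Y ω - ((P[Y | mSig X]) ω + h * δm (X ω))
            - τ * (p ω - (P[p | mSig X]) ω)) ∂P)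
        = fun _ : ℝ => ∫ ω, 2 * (p ω - (P[p|mSig X]) ω)
          * (Y ω - (P[Y|mSig X]) ω - τ * (p ω - (P[p|mSig X]) ω)) ∂P :=
      funext key1
    rw [hfun]
    exact hasDerivAt_const 0 _
  · -- second derivative: the function is c0 + h^2 * c2
    set c0 := ∫ ω, 2 * (p ω - (P[p|mSig X]) ω)
      * (Y ω - (P[Y|mSig X]) ω - τ * (p ω - (P[p|mSig X]) ω)) ∂P with hc0
    set c2 := -(2 * τ) * ∫ ω, δr (X ω) * δr (X ω) ∂P with hc2
    have key2 : ∀ h : ℝ, (∫ ω, 2 * (p ω - ((P[p | mSig X]) ω + h * δr (X ω)))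
        * (Y ω - (P[Y | mSig X]) ω
            - τ * (p ω - ((P[p | mSig X]) ω + h * δr (X ω)))) ∂P)
        = c0 + h ^ 2 * c2 := by
      intro h
      have he : (fun ω => 2 * (p ω - ((P[p | mSig X]) ω + h * δr (X ω)))
          * (Y ω - (P[Y | mSig X]) ω
              - τ * (p ω - ((P[p | mSig X]) ω + h * δr (X ω)))))
          = fun ω => ((2 * (p ω - (P[p|mSig X]) ω)
              * (Y ω - (P[Y|mSig X]) ω - τ * (p ω - (P[p|mSig X]) ω))
            - (2 * h) * (δr (X ω) * (Y ω - (P[Y|mSig X]) ω)))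
            + (4 * τ * h) * (δr (X ω) * (p ω - (P[p|mSig X]) ω)))
            - (2 * τ * h ^ 2) * (δr (X ω) * δr (X ω)) := by
        funext ω; ring
      have I1 : Integrable (fun ω => 2 * (p ω - (P[p|mSig X]) ω)
          * (Y ω - (P[Y|mSig X]) ω - τ * (p ω - (P[p|mSig X]) ω))
          - 2 * h * (δr (X ω) * (Y ω - (P[Y|mSig X]) ω))) P :=
        hInt0.sub (hbR.const_mul (2 * h))
      have I2 : Integrable (fun ω => (2 * (p ω - (P[p|mSig X]) ω)
          * (Y ω - (P[Y|mSig X]) ω - τ * (p ω - (P[p|mSig X]) ω))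
          - 2 * h * (δr (X ω) * (Y ω - (P[Y|mSig X]) ω)))
          + 4 * τ * h * (δr (X ω) * (p ω - (P[p|mSig X]) ω))) P :=
        I1.add (hba.const_mul (4 * τ * h))
      rw [he, integral_sub I2 (hbb.const_mul (2 * τ * h ^ 2)),
        integral_add I1 (hba.const_mul (4 * τ * h)),
        integral_sub hInt0 (hbR.const_mul (2 * h)),
        integral_const_mul, integral_const_mul, integral_const_mul,
        obR, oba, mul_zero, mul_zero, sub_zero, add_zero, hc0, hc2]
      ring
    have hfun : (fun h : ℝ => ∫ ω, 2 * (p ω - ((P[p | mSig X]) ω + h * δr (X ω)))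
        * (Y ω - (P[Y | mSig X]) ω
            - τ * (p ω - ((P[p | mSig X]) ω + h * δr (X ω)))) ∂P)
        = fun h : ℝ => c0 + h ^ 2 * c2 := funext key2
    rw [hfun]
    have hD := ((hasDerivAt_pow 2 (0:ℝ)).mul_const c2).const_add c0
    simpa using hD
end
end

section
/- Suppose the structural mean model holds with covariate-varying effect: E[Y | G, p, X] = μ(X) + τ(X)·G a.s., together with conditional calibration E[G | p, X] = p a.s. and finite second moments (τ(X) bounded). Then E[(2p − 1)(Y − m(X))] = 2·E[τ(X)·Var(p | X)], where m(X) = E[Y | X] and Var(p | X) = E[(p − r(X))² | X]. Consequently, if E[Var(p | X)] > 0, the ratio E[(2p−1)(Y−m(X))]/(2E[(p−r(X))²]) equals the variance-weighted average E[τ(X)·Var(p | X)] / E[Var(p | X)]. -/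
open MeasureTheory ProbabilityTheory

noncomputable section

lemma integral_mul_condexp' {Ω : Type*} {m m0 : MeasurableSpace Ω} (hm : m ≤ m0)
    (P : Measure Ω) [IsFiniteMeasure P] {f g : Ω → ℝ}
    (hf : StronglyMeasurable[m] f) (hfg : Integrable (fun ω => f ω * g ω) P)
    (hg : Integrable g P) :
    ∫ ω, f ω * g ω ∂P = ∫ ω, f ω * (P[g|m]) ω ∂P := by
  have h : P[fun ω => f ω * g ω|m] =ᵐ[P] fun ω => f ω * (P[g|m]) ω :=
    condExp_mul_of_stronglyMeasurable_left (μ := P) hf hfg hg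
  calc ∫ ω, f ω * g ω ∂P = ∫ ω, (P[fun ω => f ω * g ω|m]) ω ∂P :=
        (integral_condExp hm).symm
    _ = ∫ ω, f ω * (P[g|m]) ω ∂P := integral_congr_ae h

theorem stmt19 {Ω 𝓧 : Type*} [MeasurableSpace Ω] [MeasurableSpace 𝓧]
    (P : Measure Ω) [IsProbabilityMeasure P]
    (X : Ω → 𝓧) (Y p G : Ω → ℝ) (μf τf : 𝓧 → ℝ)
    (hX : Measurable X) (hp : Measurable p) (hG : Measurable G)
    (hμf : Measurable μf) (hτf : Measurable τf) (hτfb : ∃ C, ∀ x, |τf x| ≤ C)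
    (hY2 : MemLp Y 2 P)
    (hp01 : ∀ ω, p ω ∈ Set.Icc (0:ℝ) 1)
    (hG01 : ∀ ω, G ω = 0 ∨ G ω = 1)
    (hmean : P[Y | mSig G ⊔ mSig p ⊔ mSig X]
      =ᵐ[P] fun ω => μf (X ω) + τf (X ω) * G ω)
    (hcal : P[G | mSig p ⊔ mSig X] =ᵐ[P] p) :
    (∫ ω, (2 * p ω - 1) * (Y ω - (P[Y | mSig X]) ω) ∂P
      = 2 * ∫ ω, τf (X ω)
          * (P[fun ω' => (p ω' - (P[p | mSig X]) ω') ^ 2 | mSig X]) ω ∂P) ∧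
    (0 < ∫ ω, (p ω - (P[p | mSig X]) ω) ^ 2 ∂P →
      (∫ ω, (2 * p ω - 1) * (Y ω - (P[Y | mSig X]) ω) ∂P)
          / (2 * ∫ ω, (p ω - (P[p | mSig X]) ω) ^ 2 ∂P)
        = (∫ ω, τf (X ω)
            * (P[fun ω' => (p ω' - (P[p | mSig X]) ω') ^ 2 | mSig X]) ω ∂P)
          / ∫ ω, (P[fun ω' => (p ω' - (P[p | mSig X]) ω') ^ 2 | mSig X]) ω ∂P) := by
  obtain ⟨C, hC⟩ := hτfb
  -- σ-algebra inequalities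
  have hmX : mSig X ≤ ‹MeasurableSpace Ω› := measurable_iff_comap_le.mp hX
  have hmpX : mSig p ⊔ mSig X ≤ ‹MeasurableSpace Ω› :=
    sup_le (measurable_iff_comap_le.mp hp) hmX
  have hmGpX : mSig G ⊔ mSig p ⊔ mSig X ≤ ‹MeasurableSpace Ω› :=
    sup_le (sup_le (measurable_iff_comap_le.mp hG) (measurable_iff_comap_le.mp hp)) hmX
  have hXpX : mSig X ≤ mSig p ⊔ mSig X := le_sup_right
  have hpXGpX : mSig p ⊔ mSig X ≤ mSig G ⊔ mSig p ⊔ mSig X :=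
    sup_le (le_sup_of_le_left le_sup_right) le_sup_right
  -- small-σ-algebra measurability
  have hpm : Measurable[mSig p] p := measurable_iff_comap_le.mpr le_rfl
  have hXm : Measurable[mSig X] X := measurable_iff_comap_le.mpr le_rfl
  have hτX : Measurable[mSig X] (fun ω => τf (X ω)) := hτf.comp hXm
  have hμX : Measurable[mSig X] (fun ω => μf (X ω)) := hμf.comp hXm
  have hfm : Measurable[mSig p ⊔ mSig X] (fun ω => 2 * p ω - 1) :=
    (((hpm.mono le_sup_left le_rfl).const_mul 2).sub measurable_const)
  set r : Ω → ℝ := P[p | mSig X] with hr_def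
  set mY : Ω → ℝ := P[Y | mSig X] with hmY_def
  set V : Ω → ℝ := P[fun ω' => (p ω' - r ω') ^ 2 | mSig X] with hV_def
  -- basic bounds
  have hGb : ∀ ω, |G ω| ≤ 1 := by
    intro ω; rcases hG01 ω with h | h <;> simp [h]
  have hpb : ∀ ω, |p ω| ≤ 1 := by
    intro ω; rw [abs_le]; constructor <;> linarith [(hp01 ω).1, (hp01 ω).2]
  have hfb : ∀ ω, |2 * p ω - 1| ≤ 1 := by
    intro ω; rw [abs_le]; constructor <;> linarith [(hp01 ω).1, (hp01 ω).2]
  -- integrabilities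
  have hYint : Integrable Y P := hY2.integrable one_le_two
  have hpint : Integrable p P := by
    refine (integrable_const (1:ℝ)).mono' hp.aestronglyMeasurable (ae_of_all _ fun ω => ?_)
    simpa [Real.norm_eq_abs] using hpb ω
  have hGint : Integrable G P := by
    refine (integrable_const (1:ℝ)).mono' hG.aestronglyMeasurable (ae_of_all _ fun ω => ?_)
    simpa [Real.norm_eq_abs] using hGb ω
  have hτG : Integrable (fun ω => τf (X ω) * G ω) P := by
    refine (integrable_const C).mono' ((hτf.comp hX).mul hG).aestronglyMeasurable
      (ae_of_all _ fun ω => ?_)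
    rw [Real.norm_eq_abs, abs_mul]
    calc |τf (X ω)| * |G ω| ≤ C * 1 :=
          mul_le_mul (hC (X ω)) (hGb ω) (abs_nonneg _) ((abs_nonneg (τf (X ω))).trans (hC (X ω)))
      _ = C := mul_one C
  have hτp : Integrable (fun ω => τf (X ω) * p ω) P := by
    refine (integrable_const C).mono' ((hτf.comp hX).mul hp).aestronglyMeasurable
      (ae_of_all _ fun ω => ?_)
    rw [Real.norm_eq_abs, abs_mul]
    calc |τf (X ω)| * |p ω| ≤ C * 1 :=
          mul_le_mul (hC (X ω)) (hpb ω) (abs_nonneg _) ((abs_nonneg (τf (X ω))).trans (hC (X ω)))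
      _ = C := mul_one C
  have hμXint : Integrable (fun ω => μf (X ω)) P := by
    refine ((integrable_condExp (μ := P) (f := Y) (m := mSig G ⊔ mSig p ⊔ mSig X)).sub hτG).congr ?_
    filter_upwards [hmean] with ω h
    simp only [Pi.sub_apply, h]
    ring
  -- properties of r
  have hrmeas : StronglyMeasurable[mSig X] r := stronglyMeasurable_condExp
  have hrint : Integrable r P := integrable_condExp
  have hr0 : ∀ᵐ ω ∂P, 0 ≤ r ω := condExp_nonneg (ae_of_all _ fun ω => (hp01 ω).1)
  have hr1 : ∀ᵐ ω ∂P, r ω ≤ 1 := by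
    have h := condExp_mono (m := mSig X) (μ := P) hpint (integrable_const (1:ℝ))
      (ae_of_all _ fun ω => (hp01 ω).2)
    rw [condExp_const hmX] at h
    exact h
  have hprint : Integrable (fun ω => (p ω - r ω) ^ 2) P := by
    refine (integrable_const (1:ℝ)).mono'
      ((hp.sub (hrmeas.mono hmX).measurable).pow_const 2).aestronglyMeasurable ?_
    filter_upwards [hr0, hr1] with ω h0 h1
    rw [Real.norm_eq_abs, abs_pow]
    refine pow_le_one₀ (abs_nonneg _) ?_
    rw [abs_le]; constructor <;> linarith [(hp01 ω).1, (hp01 ω).2]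
  -- Step 1: E[Y | p, X] = μ(X) + τ(X) p  a.e.
  have key1 : P[Y | mSig p ⊔ mSig X] =ᵐ[P] fun ω => μf (X ω) + τf (X ω) * p ω := by
    have h1 : P[Y | mSig p ⊔ mSig X]
        =ᵐ[P] P[P[Y | mSig G ⊔ mSig p ⊔ mSig X] | mSig p ⊔ mSig X] :=
      (condExp_condExp_of_le hpXGpX hmGpX).symm
    have h2 : P[P[Y | mSig G ⊔ mSig p ⊔ mSig X] | mSig p ⊔ mSig X]
        =ᵐ[P] P[fun ω => μf (X ω) + τf (X ω) * G ω | mSig p ⊔ mSig X] :=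
      condExp_congr_ae hmean
    have hadd : P[fun ω => μf (X ω) + τf (X ω) * G ω | mSig p ⊔ mSig X]
        =ᵐ[P] P[(fun ω => μf (X ω)) | mSig p ⊔ mSig X]
          + P[(fun ω => τf (X ω) * G ω) | mSig p ⊔ mSig X] :=
      condExp_add hμXint hτG _
    have hid : P[(fun ω => μf (X ω)) | mSig p ⊔ mSig X] = fun ω => μf (X ω) :=
      condExp_of_stronglyMeasurable hmpX
        ((hμX.mono hXpX le_rfl).stronglyMeasurable) hμXint
    have hmul : P[(fun ω => τf (X ω) * G ω) | mSig p ⊔ mSig X]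
        =ᵐ[P] fun ω => τf (X ω) * (P[G | mSig p ⊔ mSig X]) ω :=
      condExp_mul_of_stronglyMeasurable_left ((hτX.mono hXpX le_rfl).stronglyMeasurable) hτG hGint
    refine (h1.trans (h2.trans hadd)).trans ?_
    filter_upwards [hmul, hcal] with ω e2 e3
    simp only [Pi.add_apply, congrFun hid ω, e2, e3]
  -- Step 2: E[Y | X] = μ(X) + τ(X) r  a.e.
  have key2 : mY =ᵐ[P] fun ω => μf (X ω) + τf (X ω) * r ω := by
    have h1 : mY =ᵐ[P] P[P[Y | mSig p ⊔ mSig X] | mSig X] :=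
      (condExp_condExp_of_le hXpX hmpX).symm
    have h2 : P[P[Y | mSig p ⊔ mSig X] | mSig X]
        =ᵐ[P] P[fun ω => μf (X ω) + τf (X ω) * p ω | mSig X] :=
      condExp_congr_ae key1
    have hadd : P[fun ω => μf (X ω) + τf (X ω) * p ω | mSig X]
        =ᵐ[P] P[(fun ω => μf (X ω)) | mSig X]
          + P[(fun ω => τf (X ω) * p ω) | mSig X] :=
      condExp_add hμXint hτp _
    have hid : P[(fun ω => μf (X ω)) | mSig X] = fun ω => μf (X ω) :=
      condExp_of_stronglyMeasurable hmX hμX.stronglyMeasurable hμXint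
    have hmul : P[(fun ω => τf (X ω) * p ω) | mSig X]
        =ᵐ[P] fun ω => τf (X ω) * r ω :=
      condExp_mul_of_stronglyMeasurable_left hτX.stronglyMeasurable hτp hpint
    refine (h1.trans (h2.trans hadd)).trans ?_
    filter_upwards [hmul] with ω e2
    simp only [Pi.add_apply, congrFun hid ω, e2]
  -- Step 3: E[Y - mY | p, X] = τ(X)(p - r)  a.e.
  have hstep : P[fun ω => Y ω - mY ω | mSig p ⊔ mSig X]
      =ᵐ[P] fun ω => τf (X ω) * (p ω - r ω) := by
    have hsub : P[fun ω => Y ω - mY ω | mSig p ⊔ mSig X]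
        =ᵐ[P] P[Y | mSig p ⊔ mSig X] - P[mY | mSig p ⊔ mSig X] :=
      condExp_sub hYint integrable_condExp _
    have hid2 : P[mY | mSig p ⊔ mSig X] = mY :=
      condExp_of_stronglyMeasurable hmpX (stronglyMeasurable_condExp.mono hXpX)
        integrable_condExp
    filter_upwards [hsub, key1, key2] with ω e1 e2 e3
    rw [e1]
    simp only [Pi.sub_apply, congrFun hid2 ω, e2, e3]
    ring
  -- Step 5: E[(2p-1)(p-r) | X] = 2 V  a.e.
  have h2r1pr : Integrable (fun ω => (2 * r ω - 1) * (p ω - r ω)) P := by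
    refine (integrable_const (2:ℝ)).mono'
      ((((hrmeas.mono hmX).measurable.const_mul 2).sub measurable_const).mul
        (hp.sub (hrmeas.mono hmX).measurable)).aestronglyMeasurable ?_
    filter_upwards [hr0, hr1] with ω h0 h1
    rw [Real.norm_eq_abs, abs_mul]
    have e1 : |2 * r ω - 1| ≤ 1 := by rw [abs_le]; constructor <;> linarith
    have e2 : |p ω - r ω| ≤ 2 := by
      rw [abs_le]; constructor <;> linarith [(hp01 ω).1, (hp01 ω).2]
    calc |2 * r ω - 1| * |p ω - r ω| ≤ 1 * 2 :=
          mul_le_mul e1 e2 (abs_nonneg _) zero_le_one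
      _ = 2 := one_mul 2
  have hfprint : Integrable (fun ω => (2 * p ω - 1) * (p ω - r ω)) P := by
    refine (integrable_const (2:ℝ)).mono'
      (((hp.const_mul 2).sub measurable_const).mul
        (hp.sub (hrmeas.mono hmX).measurable)).aestronglyMeasurable ?_
    filter_upwards [hr0, hr1] with ω h0 h1
    rw [Real.norm_eq_abs, abs_mul]
    have e2 : |p ω - r ω| ≤ 2 := by
      rw [abs_le]; constructor <;> linarith [(hp01 ω).1, (hp01 ω).2]
    calc |2 * p ω - 1| * |p ω - r ω| ≤ 1 * 2 :=
          mul_le_mul (hfb ω) e2 (abs_nonneg _) zero_le_one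
      _ = 2 := one_mul 2
  have step5 : P[fun ω => (2 * p ω - 1) * (p ω - r ω) | mSig X]
      =ᵐ[P] fun ω => 2 * V ω := by
    have hdecomp : (fun ω => (2 * p ω - 1) * (p ω - r ω))
        = fun ω => 2 * (p ω - r ω) ^ 2 + (2 * r ω - 1) * (p ω - r ω) :=
      funext fun ω => by ring
    rw [hdecomp]
    have hadd : P[fun ω => 2 * (p ω - r ω) ^ 2 + (2 * r ω - 1) * (p ω - r ω) | mSig X]
        =ᵐ[P] P[(fun ω => 2 * (p ω - r ω) ^ 2) | mSig X]
          + P[(fun ω => (2 * r ω - 1) * (p ω - r ω)) | mSig X] :=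
      condExp_add (hprint.const_mul 2) h2r1pr _
    have hsmul : P[(fun ω => 2 * (p ω - r ω) ^ 2) | mSig X]
        =ᵐ[P] (2:ℝ) • P[(fun ω => (p ω - r ω) ^ 2) | mSig X] :=
      condExp_smul (2:ℝ) _ _
    have hmul : P[(fun ω => (2 * r ω - 1) * (p ω - r ω)) | mSig X]
        =ᵐ[P] fun ω => (2 * r ω - 1) * (P[(fun ω => p ω - r ω) | mSig X]) ω :=
      condExp_mul_of_stronglyMeasurable_left
        (((hrmeas.measurable.const_mul 2).sub measurable_const).stronglyMeasurable)
        h2r1pr (hpint.sub hrint)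
    have hzero : P[(fun ω => p ω - r ω) | mSig X] =ᵐ[P] fun _ => (0:ℝ) := by
      have hsub : P[(fun ω => p ω - r ω) | mSig X]
          =ᵐ[P] P[p | mSig X] - P[r | mSig X] := condExp_sub hpint hrint _
      have hid3 : P[r | mSig X] = r :=
        condExp_of_stronglyMeasurable hmX stronglyMeasurable_condExp integrable_condExp
      filter_upwards [hsub] with ω e
      rw [e]
      simp only [Pi.sub_apply, congrFun hid3 ω, ← hr_def, sub_self]
    filter_upwards [hadd, hsmul, hmul, hzero] with ω e1 e2 e3 e4
    rw [e1]
    simp only [Pi.add_apply, e2, e3, e4, Pi.smul_apply, smul_eq_mul, mul_zero, add_zero,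
      hV_def]
  -- Part 1
  have hfasm : AEStronglyMeasurable (fun ω => 2 * p ω - 1) P :=
    ((hp.const_mul 2).sub measurable_const).aestronglyMeasurable
  have hYmint : Integrable (fun ω => Y ω - mY ω) P := hYint.sub integrable_condExp
  have hfYint : Integrable (fun ω => (2 * p ω - 1) * (Y ω - mY ω)) P :=
    hYmint.bdd_mul hfasm (ae_of_all _ fun ω => by
      simpa [Real.norm_eq_abs] using hfb ω)
  have hVint : Integrable V P := integrable_condExp
  have hτfpr : Integrable (fun ω => τf (X ω) * ((2 * p ω - 1) * (p ω - r ω))) P :=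
    hfprint.bdd_mul (hτf.comp hX).aestronglyMeasurable
      (ae_of_all _ fun ω => by simpa [Real.norm_eq_abs] using hC (X ω))
  have part1 : ∫ ω, (2 * p ω - 1) * (Y ω - mY ω) ∂P = 2 * ∫ ω, τf (X ω) * V ω ∂P := by
    calc ∫ ω, (2 * p ω - 1) * (Y ω - mY ω) ∂P
        = ∫ ω, (2 * p ω - 1) * (P[fun ω' => Y ω' - mY ω' | mSig p ⊔ mSig X]) ω ∂P :=
          integral_mul_condexp' hmpX P hfm.stronglyMeasurable hfYint hYmint
      _ = ∫ ω, τf (X ω) * ((2 * p ω - 1) * (p ω - r ω)) ∂P := by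
          refine integral_congr_ae ?_
          filter_upwards [hstep] with ω e
          rw [e]; ring
      _ = ∫ ω, τf (X ω) * (P[fun ω' => (2 * p ω' - 1) * (p ω' - r ω') | mSig X]) ω ∂P :=
          integral_mul_condexp' hmX P hτX.stronglyMeasurable hτfpr hfprint
      _ = ∫ ω, τf (X ω) * (2 * V ω) ∂P := by
          refine integral_congr_ae ?_
          filter_upwards [step5] with ω e
          rw [e]
      _ = ∫ ω, 2 * (τf (X ω) * V ω) ∂P := by
          congr 1; funext ω; ring
      _ = 2 * ∫ ω, τf (X ω) * V ω ∂P := integral_const_mul 2 _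
  refine ⟨part1, fun hpos => ?_⟩
  have hVeq : ∫ ω, (p ω - r ω) ^ 2 ∂P = ∫ ω, V ω ∂P := (integral_condExp hmX).symm
  rw [part1, hVeq]
  exact mul_div_mul_left _ _ two_ne_zero
end
end
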